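/- arXiv:2306.12158 — 3 statements merged into one kernel-verified Lean document; each statement's English description precedes it below -/
import Mathlib

section
/- For M ∈ AMS_{3k−1} (k ≥ 1), one has M ∪ {3k} ∉ AMS_{3k} if and only if |M| = 2k−1. -/
/-- `w` (read on positions `1,…,2n`) is a Stirling permutation of order `n`:
each value `1,…,n` appears exactly twice, all letters lie in `[1,n]`, and every
value between the two copies of a value exceeds it. -/
def IsStirling (n : ℕ) (w : ℕ → ℕ) : Prop :=
  (∀ k, 1 ≤ k → k ≤ n → ((Finset.Icc 1 (2*n)).filter (fun i => w i = k)).card = 2) ∧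
  (∀ i, 1 ≤ i → i ≤ 2*n → 1 ≤ w i ∧ w i ≤ n) ∧
  (∀ i j l, 1 ≤ i → i < j → j < l → l ≤ 2*n → w i = w l → w i < w j)

/-- The set of mesas of `w`: values `m` with `w(i-1) < w(i) = w(i+1) = m > w(i+2)`
for some `2 ≤ i ≤ 2n-2`. -/
def MesaSet (n : ℕ) (w : ℕ → ℕ) : Set ℕ :=
  {m | ∃ i, 2 ≤ i ∧ i + 2 ≤ 2*n ∧ w (i-1) < w i ∧ w i = w (i+1) ∧ w (i+2) < w i ∧ w i = m}

/-- The collection of admissible mesa sets of order `n`. -/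
def AMS (n : ℕ) : Set (Set ℕ) := {M | ∃ w, IsStirling n w ∧ MesaSet n w = M}

/-- indices of mesas -/
def mesaIdx (n : ℕ) (w : ℕ → ℕ) : Finset ℕ :=
  (Finset.Icc 2 (2*n)).filter
    (fun i => i + 2 ≤ 2*n ∧ w (i-1) < w i ∧ w i = w (i+1) ∧ w (i+2) < w i)

lemma mem_mesaIdx {n : ℕ} {w : ℕ → ℕ} {i : ℕ} :
    i ∈ mesaIdx n w ↔ 2 ≤ i ∧ i + 2 ≤ 2*n ∧ w (i-1) < w i ∧ w i = w (i+1) ∧ w (i+2) < w i := by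
  simp only [mesaIdx, Finset.mem_filter, Finset.mem_Icc]
  constructor
  · rintro ⟨⟨h1, h2⟩, h⟩; exact ⟨h1, h⟩
  · rintro ⟨h1, h2, h⟩; exact ⟨⟨h1, by omega⟩, h2, h⟩

lemma mesaSet_eq (n : ℕ) (w : ℕ → ℕ) :
    MesaSet n w = ↑((mesaIdx n w).image w) := by
  ext m
  simp only [MesaSet, Set.mem_setOf_eq, Finset.coe_image, Set.mem_image, Finset.mem_coe,
    mem_mesaIdx]
  constructor
  · rintro ⟨i, h1, h2, h3, h4, h5, h6⟩; exact ⟨i, ⟨h1, h2, h3, h4, h5⟩, h6⟩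
  · rintro ⟨i, ⟨h1, h2, h3, h4, h5⟩, h6⟩; exact ⟨i, h1, h2, h3, h4, h5, h6⟩

lemma mesaIdx_sep {n : ℕ} {w : ℕ → ℕ} {i i' : ℕ} (h : i ∈ mesaIdx n w)
    (h' : i' ∈ mesaIdx n w) (hlt : i < i') : i + 3 ≤ i' := by
  rw [mem_mesaIdx] at h h'
  obtain ⟨h1, h2, h3, h4, h5⟩ := h
  obtain ⟨h1', h2', h3', h4', h5'⟩ := h'
  by_contra hc
  have hcase : i' = i + 1 ∨ i' = i + 2 := by omega
  rcases hcase with rfl | rfl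
  · have he : i + 1 - 1 = i := by omega
    rw [he] at h3'; omega
  · have he : i + 2 - 1 = i + 1 := by omega
    rw [he] at h3'; omega

lemma mesaIdx_card (n : ℕ) (w : ℕ → ℕ) :
    (mesaIdx n w).card ≤ (2*n-4)/3 + 1 := by
  have := Finset.card_le_card_of_injOn (f := fun i => (i-2)/3)
    (t := Finset.Iic ((2*n-4)/3)) (s := mesaIdx n w)
    (by
      intro i hi
      rw [Finset.mem_coe, mem_mesaIdx] at hi
      simp only [Finset.mem_coe, Finset.mem_Iic]
      exact Nat.div_le_div_right (by omega)
    )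
    (by
      intro a ha b hb hab
      by_contra hne
      rcases Nat.lt_or_ge a b with h | h
      · have hsep := mesaIdx_sep ha hb h
        have ha2 : 2 ≤ a := (mem_mesaIdx.mp ha).1
        have : (a-2)/3 < (b-2)/3 := by
          have h1 : (a-2)/3 + 1 = ((a-2)+3)/3 := by
            rw [Nat.add_div_right _ (by norm_num)]
          have h2 : ((a-2)+3)/3 ≤ (b-2)/3 := Nat.div_le_div_right (by omega)
          omega
        simp only at hab; omega
      · have h' : b < a := by omega
        have hsep := mesaIdx_sep hb ha h'
        have hb2 : 2 ≤ b := (mem_mesaIdx.mp hb).1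
        have : (b-2)/3 < (a-2)/3 := by
          have h1 : (b-2)/3 + 1 = ((b-2)+3)/3 := by
            rw [Nat.add_div_right _ (by norm_num)]
          have h2 : ((b-2)+3)/3 ≤ (a-2)/3 := Nat.div_le_div_right (by omega)
          omega
        simp only at hab; omega
    )
  simpa using this

lemma mesaSet_ncard_le (n : ℕ) (w : ℕ → ℕ) :
    (MesaSet n w).ncard ≤ (2*n-4)/3 + 1 := by
  rw [mesaSet_eq, Set.ncard_coe_finset]
  exact le_trans (Finset.card_image_le) (mesaIdx_card n w)

lemma mesa_le {n : ℕ} {w : ℕ → ℕ} (hw : IsStirling n w) {m : ℕ} (hm : m ∈ MesaSet n w) :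
    m ≤ n := by
  obtain ⟨i, h1, h2, _, _, _, h6⟩ := hm
  have := hw.2.1 i (by omega) (by omega)
  omega

lemma mesaIdx_injOn {n : ℕ} {w : ℕ → ℕ} (hw : IsStirling n w) :
    Set.InjOn w ↑(mesaIdx n w) := by
  have key : ∀ a b : ℕ, a ∈ mesaIdx n w → b ∈ mesaIdx n w → a < b → w a = w b → False := by
    intro a b ha hb hlt hab
    have hsep := mesaIdx_sep ha hb hlt
    rw [mem_mesaIdx] at ha hb
    obtain ⟨ha1, ha2, ha3, ha4, ha5⟩ := ha
    obtain ⟨hb1, hb2, hb3, hb4, hb5⟩ := hb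
    have hv := hw.2.1 a (by omega) (by omega)
    have hcard := hw.1 (w a) hv.1 hv.2
    have h3 : 2 < ((Finset.Icc 1 (2*n)).filter (fun i => w i = w a)).card := by
      rw [Finset.two_lt_card]
      refine ⟨a, ?_, a+1, ?_, b, ?_, by omega, by omega, by omega⟩
      · exact Finset.mem_filter.mpr ⟨Finset.mem_Icc.mpr ⟨by omega, by omega⟩, rfl⟩
      · exact Finset.mem_filter.mpr ⟨Finset.mem_Icc.mpr ⟨by omega, by omega⟩, ha4.symm⟩
      · exact Finset.mem_filter.mpr ⟨Finset.mem_Icc.mpr ⟨by omega, by omega⟩, hab.symm⟩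
    omega
  intro a ha b hb hab
  rcases Nat.lt_trichotomy a b with h | h | h
  · exact absurd hab (by intro h'; exact key a b (by simpa using ha) (by simpa using hb) h h')
  · exact h
  · exact absurd hab.symm (by intro h'; exact key b a (by simpa using hb) (by simpa using ha) h h')

lemma mesaIdx_card_eq {n : ℕ} {w : ℕ → ℕ} (hw : IsStirling n w) :
    (mesaIdx n w).card = (MesaSet n w).ncard := by
  rw [mesaSet_eq, Set.ncard_coe_finset, Finset.card_image_of_injOn (mesaIdx_injOn hw)]

lemma insert_lemma {n : ℕ} {w : ℕ → ℕ} (hw : IsStirling n w) (j : ℕ) (hj1 : 1 ≤ j)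
    (hj2 : j + 1 ≤ 2*n)
    (hslot : ∀ i ∈ mesaIdx n w, j + 2 ≤ i ∨ i + 2 ≤ j) :
    MesaSet n w ∪ {n+1} ∈ AMS (n+1) := by
  classical
  set w' : ℕ → ℕ := fun p => if p ≤ j then w p else if p ≤ j+2 then n+1 else w (p-2) with hw'def
  have hA : ∀ p, p ≤ j → w' p = w p := by intro p hp; simp [w', hp]
  have hB1 : w' (j+1) = n+1 := by simp [w']
  have hB2 : w' (j+2) = n+1 := by simp [w']
  have hC : ∀ p, j+3 ≤ p → w' p = w (p-2) := by
    intro p hp; simp only [w']; rw [if_neg (by omega), if_neg (by omega)]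
  have hval := hw.2.1
  -- positions of the value n+1
  have hpos : ∀ p, 1 ≤ p → p ≤ 2*(n+1) → w' p = n+1 → p = j+1 ∨ p = j+2 := by
    intro p hp1 hp2 hpv
    by_contra hc
    push_neg at hc
    rcases le_or_gt p j with h | h
    · rw [hA p h] at hpv
      have := hval p hp1 (by omega)
      omega
    · have h3 : j + 3 ≤ p := by omega
      rw [hC p h3] at hpv
      have := hval (p-2) (by omega) (by omega)
      omega
  refine ⟨w', ⟨?_, ?_, ?_⟩, ?_⟩
  · -- counts
    intro v hv1 hv2
    rcases Nat.lt_or_ge v (n+1) with hvn | hvn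
    · -- v ≤ n : use the shift bijection
      have hvle : v ≤ n := by omega
      have hfe : (Finset.Icc 1 (2*(n+1))).filter (fun p => w' p = v) =
          ((Finset.Icc 1 (2*n)).filter (fun p => w p = v)).image
            (fun i => if i ≤ j then i else i + 2) := by
        ext p
        simp only [Finset.mem_filter, Finset.mem_Icc, Finset.mem_image]
        constructor
        · rintro ⟨⟨hp1, hp2⟩, hpv⟩
          rcases le_or_gt p j with h | h
          · exact ⟨p, ⟨⟨hp1, by omega⟩, by rwa [hA p h] at hpv⟩, by simp [h]⟩
          · rcases le_or_gt p (j+2) with h' | h'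
            · exfalso
              have : w' p = n+1 := by simp only [w']; rw [if_neg (by omega), if_pos h']
              omega
            · refine ⟨p - 2, ⟨⟨by omega, by omega⟩, by rwa [hC p (by omega)] at hpv⟩, ?_⟩
              rw [if_neg (by omega)]; omega
        · rintro ⟨i, ⟨⟨hi1, hi2⟩, hiv⟩, rfl⟩
          rcases le_or_gt i j with h | h
          · rw [if_pos h]
            exact ⟨⟨hi1, by omega⟩, by rwa [hA i h]⟩
          · rw [if_neg (by omega)]
            refine ⟨⟨by omega, by omega⟩, ?_⟩
            rw [hC (i+2) (by omega)]
            simpa using hiv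
      rw [hfe, Finset.card_image_of_injective _ ?_, hw.1 v hv1 hvle]
      · intro a b hab
        simp only at hab
        split_ifs at hab <;> omega
    · -- v = n+1
      have hveq : v = n+1 := by omega
      subst hveq
      have : (Finset.Icc 1 (2*(n+1))).filter (fun p => w' p = n+1) = {j+1, j+2} := by
        ext p
        simp only [Finset.mem_filter, Finset.mem_Icc, Finset.mem_insert, Finset.mem_singleton]
        constructor
        · rintro ⟨⟨hp1, hp2⟩, hpv⟩
          exact hpos p hp1 hp2 hpv
        · rintro (rfl | rfl)
          · exact ⟨⟨by omega, by omega⟩, hB1⟩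
          · exact ⟨⟨by omega, by omega⟩, hB2⟩
      rw [this, Finset.card_pair (by omega)]
  · -- range
    intro p hp1 hp2
    rcases le_or_gt p j with h | h
    · rw [hA p h]
      have := hval p hp1 (by omega)
      omega
    · rcases le_or_gt p (j+2) with h' | h'
      · have : w' p = n+1 := by simp only [w']; rw [if_neg (by omega), if_pos h']
        omega
      · rw [hC p (by omega)]
        have := hval (p-2) (by omega) (by omega)
        omega
  · -- betweenness
    intro i q l hi1 hiq hql hl2 hil
    by_cases hiN : w' i = n+1
    · have h1 := hpos i hi1 (by omega) hiN
      have h2 := hpos l (by omega) hl2 (by rw [← hil]; exact hiN)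
      omega
    · -- w' i ≤ n, corresponding old positions
      have hiv : (i ≤ j ∧ w' i = w i) ∨ (j + 3 ≤ i ∧ w' i = w (i-2)) := by
        rcases le_or_gt i j with h | h
        · exact Or.inl ⟨h, hA i h⟩
        · rcases le_or_gt i (j+2) with h' | h'
          · exfalso; apply hiN; simp only [w']; rw [if_neg (by omega), if_pos h']
          · exact Or.inr ⟨by omega, hC i (by omega)⟩
      have hiLe : w' i ≤ n := by
        rcases hiv with ⟨h, he⟩ | ⟨h, he⟩
        · rw [he]; exact (hval i hi1 (by omega)).2
        · rw [he]; exact (hval (i-2) (by omega) (by omega)).2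
      by_cases hqN : w' q = n+1
      · omega
      by_cases hlN : w' l = n+1
      · rw [hil] at hiN; exact absurd hlN hiN
      have hqv : (q ≤ j ∧ w' q = w q) ∨ (j + 3 ≤ q ∧ w' q = w (q-2)) := by
        rcases le_or_gt q j with h | h
        · exact Or.inl ⟨h, hA q h⟩
        · rcases le_or_gt q (j+2) with h' | h'
          · exfalso; apply hqN; simp only [w']; rw [if_neg (by omega), if_pos h']
          · exact Or.inr ⟨by omega, hC q (by omega)⟩
      have hlv : (l ≤ j ∧ w' l = w l) ∨ (j + 3 ≤ l ∧ w' l = w (l-2)) := by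
        rcases le_or_gt l j with h | h
        · exact Or.inl ⟨h, hA l h⟩
        · rcases le_or_gt l (j+2) with h' | h'
          · exfalso; apply hlN; simp only [w']; rw [if_neg (by omega), if_pos h']
          · exact Or.inr ⟨by omega, hC l (by omega)⟩
      rcases hiv with ⟨hi, hie⟩ | ⟨hi, hie⟩ <;> rcases hqv with ⟨hq, hqe⟩ | ⟨hq, hqe⟩ <;>
        rcases hlv with ⟨hl, hle⟩ | ⟨hl, hle⟩
      · rw [hie, hqe]; rw [hie, hle] at hil
        exact hw.2.2 i q l hi1 hiq hql (by omega) hil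
      · rw [hie, hqe]; rw [hie, hle] at hil
        exact hw.2.2 i q (l-2) hi1 hiq (by omega) (by omega) hil
      · omega
      · rw [hie, hqe]; rw [hie, hle] at hil
        exact hw.2.2 i (q-2) (l-2) hi1 (by omega) (by omega) (by omega) hil
      · omega
      · omega
      · omega
      · rw [hie, hqe]; rw [hie, hle] at hil
        exact hw.2.2 (i-2) (q-2) (l-2) (by omega) (by omega) (by omega) (by omega) hil
  · -- mesa set equality
    ext m
    simp only [Set.mem_union, Set.mem_singleton_iff]
    constructor
    · rintro ⟨i, h1, h2, h3, h4, h5, h6⟩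
      by_cases hiN : w' i = n+1
      · right; omega
      · left
        have hile : i ≤ j ∨ j + 3 ≤ i := by
          by_contra hc
          push_neg at hc
          apply hiN
          simp only [w']; rw [if_neg (by omega), if_pos (by omega)]
        rcases hile with hi | hi
        · -- old mesa at i
          have hmle : w' i ≤ n := by
            rw [hA i hi]; exact (hval i (by omega) (by omega)).2
          have hi1le : i + 1 ≤ j := by
            by_contra hc
            have : i + 1 = j + 1 := by omega
            rw [this, hB1] at h4; omega
          have hi2le : i + 2 ≤ j := by
            by_contra hc
            have : i + 2 = j + 1 := by omega
            rw [this, hB1] at h5; omega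
          refine ⟨i, h1, by omega, ?_, ?_, ?_, ?_⟩
          · rw [← hA (i-1) (by omega), ← hA i hi]; exact h3
          · rw [← hA i hi, ← hA (i+1) hi1le]; exact h4
          · rw [← hA (i+2) hi2le, ← hA i hi]; exact h5
          · rw [← hA i hi]; exact h6
        · -- old mesa at i - 2
          have hie : w' i = w (i-2) := hC i hi
          have hmle : w' i ≤ n := by
            rw [hie]; exact (hval (i-2) (by omega) (by omega)).2
          have hi1 : j + 3 ≤ i - 1 := by
            by_contra hc
            have : i - 1 = j + 2 := by omega
            rw [this, hB2] at h3; omega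
          have e1 : w' (i-1) = w (i-3) := by rw [hC (i-1) hi1]; congr 1 <;> omega
          have e2 : w' (i+1) = w (i-1) := by rw [hC (i+1) (by omega)]; congr 1 <;> omega
          have e3 : w' (i+2) = w i := by rw [hC (i+2) (by omega)]; congr 1 <;> omega
          refine ⟨i-2, by omega, by omega, ?_, ?_, ?_, ?_⟩
          · have : i - 2 - 1 = i - 3 := by omega
            rw [this, ← e1, ← hie]; exact h3
          · have : i - 2 + 1 = i - 1 := by omega
            rw [this, ← e2, ← hie]; exact h4
          · have : i - 2 + 2 = i := by omega
            rw [this, ← e3, ← hie]; exact h5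
          · rw [← hie]; exact h6
    · rintro (hm | rfl)
      · -- old mesa survives
        obtain ⟨i, h1, h2, h3, h4, h5, h6⟩ := hm
        have himem : i ∈ mesaIdx n w := mem_mesaIdx.mpr ⟨h1, h2, h3, h4, h5⟩
        rcases hslot i himem with hi | hi
        · -- j + 2 ≤ i : mesa shifts to i + 2
          have e0 : w' (i+1) = w (i-1) := by rw [hC (i+1) (by omega)]; congr 1 <;> omega
          have e1 : w' (i+2) = w i := by rw [hC (i+2) (by omega)]; congr 1 <;> omega
          have e2 : w' (i+3) = w (i+1) := by rw [hC (i+3) (by omega)]; congr 1 <;> omega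
          have e3 : w' (i+4) = w (i+2) := by rw [hC (i+4) (by omega)]; congr 1 <;> omega
          refine ⟨i+2, by omega, by omega, ?_, ?_, ?_, ?_⟩
          · have : i + 2 - 1 = i + 1 := by omega
            rw [this, e0, e1]; exact h3
          · have : i + 2 + 1 = i + 3 := by omega
            rw [this, e1, e2]; exact h4
          · have : i + 2 + 2 = i + 4 := by omega
            rw [this, e1, e3]; exact h5
          · rw [e1]; exact h6
        · -- i + 2 ≤ j : mesa stays at i
          refine ⟨i, h1, by omega, ?_, ?_, ?_, ?_⟩
          · rw [hA (i-1) (by omega), hA i (by omega)]; exact h3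
          · rw [hA i (by omega), hA (i+1) (by omega)]; exact h4
          · rw [hA (i+2) (by omega), hA i (by omega)]; exact h5
          · rw [hA i (by omega)]; exact h6
      · -- the new mesa n+1 at j+1
        refine ⟨j+1, by omega, by omega, ?_, ?_, ?_, ?_⟩
        · have : j + 1 - 1 = j := by omega
          rw [this, hA j le_rfl, hB1]
          have := hval j hj1 (by omega)
          omega
        · rw [hB1]
          have : j + 1 + 1 = j + 2 := by omega
          rw [this, hB2]
        · have : j + 1 + 2 = j + 3 := by omega
          rw [this, hC (j+3) le_rfl, hB1]
          have h1 : j + 3 - 2 = j + 1 := by omega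
          rw [h1]
          have := hval (j+1) (by omega) hj2
          omega
        · exact hB1

lemma exists_slot (n : ℕ) (w : ℕ → ℕ)
    (h : 3 * (mesaIdx n w).card < 2*n - 1) :
    ∃ j, 1 ≤ j ∧ j + 1 ≤ 2*n ∧ ∀ i ∈ mesaIdx n w, j + 2 ≤ i ∨ i + 2 ≤ j := by
  classical
  set F := (mesaIdx n w).biUnion (fun i => {i-1, i, i+1}) with hF
  have hFcard : F.card ≤ 3 * (mesaIdx n w).card := by
    refine le_trans (Finset.card_biUnion_le) ?_
    calc ∑ i ∈ mesaIdx n w, ({i-1, i, i+1} : Finset ℕ).card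
        ≤ ∑ _i ∈ mesaIdx n w, 3 := by
          refine Finset.sum_le_sum (fun i _ => ?_)
          refine le_trans (Finset.card_insert_le _ _) ?_
          refine Nat.add_le_add_right (le_trans (Finset.card_insert_le _ _) ?_) 1
          simp
      _ = 3 * (mesaIdx n w).card := by rw [Finset.sum_const, smul_eq_mul, mul_comm]
  have hS : (Finset.Icc 1 (2*n-1)).card = 2*n-1 := by
    rw [Nat.card_Icc]; omega
  have hne : ¬ (Finset.Icc 1 (2*n-1) ⊆ F) := by
    intro hsub
    have := Finset.card_le_card hsub
    omega
  obtain ⟨j, hjS, hjF⟩ := Finset.not_subset.mp hne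
  rw [Finset.mem_Icc] at hjS
  refine ⟨j, hjS.1, by omega, ?_⟩
  intro i hi
  have hi2 : 2 ≤ i := (mem_mesaIdx.mp hi).1
  have hj : j ∉ ({i-1, i, i+1} : Finset ℕ) := fun hj => hjF (Finset.mem_biUnion.mpr ⟨i, hi, hj⟩)
  simp only [Finset.mem_insert, Finset.mem_singleton] at hj
  push_neg at hj
  omega

theorem cant_add_to_full_set (k : ℕ) (hk : 1 ≤ k) (M : Set ℕ) (hM : M ∈ AMS (3*k-1)) :
    M ∪ {(3*k : ℕ)} ∉ AMS (3*k) ↔ M.ncard = 2*k - 1 := by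
  obtain ⟨w, hw, hMw⟩ := hM
  have hbound : M.ncard ≤ 2*k-1 := by
    rw [← hMw]
    have h := mesaSet_ncard_le (3*k-1) w
    omega
  have h3k : (3*k : ℕ) ∉ M := by
    intro h
    have := mesa_le hw (hMw ▸ h : (3*k:ℕ) ∈ MesaSet (3*k-1) w)
    omega
  have hfin : M.Finite := by
    rw [← hMw, mesaSet_eq]
    exact Finset.finite_toSet _
  constructor
  · intro hnot
    by_contra hne
    apply hnot
    have hcard : 3 * (mesaIdx (3*k-1) w).card < 2*(3*k-1) - 1 := by
      rw [mesaIdx_card_eq hw, hMw]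
      omega
    obtain ⟨j, hj1, hj2, hslot⟩ := exists_slot (3*k-1) w hcard
    have hres := insert_lemma hw j hj1 hj2 hslot
    rw [hMw] at hres
    have he1 : (3*k-1) + 1 = 3*k := by omega
    rw [he1] at hres
    exact hres
  · intro hcard hmem
    obtain ⟨w', hw', hM'⟩ := hmem
    have hb := mesaSet_ncard_le (3*k) w'
    rw [hM', Set.union_singleton, Set.ncard_insert_of_notMem h3k hfin, hcard] at hb
    omega
end

section
/- For every k ≥ 1, the number of admissible mesa sets M ⊆ [3k−1] with |M| = 2k−1 equals the rational Catalan number C_{2k−1,k} = (1/k)·binom(3k−2, 2k−1). -/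
open scoped Classical



noncomputable section CycleLemma

/-- step sequence: -1 at (0-based) positions in `D` (mod `N`), else +2. -/
def stepD (N : ℕ) (D : Finset ℕ) (i : ℕ) : ℤ := if i % N ∈ D then -1 else 2

def PD (N : ℕ) (D : Finset ℕ) (j : ℕ) : ℤ := ∑ i ∈ Finset.range j, stepD N D i

def GoodA (N : ℕ) (D : Finset ℕ) (r : ℕ) : Prop := ∀ j, r < j → PD N D r < PD N D j

lemma stepD_period (N : ℕ) (D : Finset ℕ) (i : ℕ) :
    stepD N D (i + N) = stepD N D i := by
  simp [stepD, Nat.add_mod_right]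

lemma PD_succ (N : ℕ) (D : Finset ℕ) (j : ℕ) :
    PD N D (j + 1) = PD N D j + stepD N D j := Finset.sum_range_succ _ _

lemma PD_add (N : ℕ) (D : Finset ℕ) (j : ℕ) :
    PD N D (j + N) = PD N D j + PD N D N := by
  induction j with
  | zero => simp [PD]
  | succ j ih =>
      have h : j + 1 + N = (j + N) + 1 := by omega
      rw [h, PD_succ, ih, stepD_period, PD_succ]; ring

lemma PD_N (N : ℕ) (D : Finset ℕ) (hD : D ⊆ Finset.range N) :
    PD N D N = 2 * N - 3 * D.card := by
  have h1 : ∀ i ∈ Finset.range N, stepD N D i = 2 - 3 * (if i ∈ D then (1:ℤ) else 0) := by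
    intro i hi
    simp only [Finset.mem_range] at hi
    simp [stepD, Nat.mod_eq_of_lt hi]
    split <;> ring
  rw [PD, Finset.sum_congr rfl h1, Finset.sum_sub_distrib]
  rw [Finset.sum_const, ← Finset.mul_sum, Finset.sum_boole]
  have h2 : (Finset.range N).filter (· ∈ D) = D := by
    rw [Finset.filter_mem_eq_inter, Finset.inter_eq_right.mpr hD]
  rw [h2]; simp [Finset.card_range]; ring

end CycleLemma

section CL2
variable {N : ℕ} {D : Finset ℕ}

lemma PD_shift (h1 : PD N D N = 1) (j : ℕ) : PD N D (j + N) = PD N D j + 1 := by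
  rw [PD_add, h1]

lemma goodA_of_window (h1 : PD N D N = 1) (hN : 0 < N) {r : ℕ}
    (h : ∀ j, r < j → j ≤ r + N → PD N D r < PD N D j) : GoodA N D r := by
  intro j hj
  induction j using Nat.strong_induction_on with
  | _ j ih =>
    by_cases hle : j ≤ r + N
    · exact h j hj hle
    · have hj' : r < j - N := by omega
      have := ih (j - N) (by omega) hj'
      have hrw : j - N + N = j := by omega
      have := PD_shift h1 (j - N)
      rw [hrw] at this
      omega

lemma exists_goodA (h1 : PD N D N = 1) (hN : 0 < N) :
    ∃ r < N, GoodA N D r := by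
  classical
  obtain ⟨a, ha, hmin⟩ := Finset.exists_min_image (Finset.range N) (PD N D)
    ⟨0, by simp [hN]⟩
  set V := (Finset.range N).filter (fun j => ∀ j' ∈ Finset.range N, PD N D j ≤ PD N D j') with hV
  have hVne : V.Nonempty := ⟨a, by simp [hV, ha]; intro j' hj'; exact hmin j' (by simpa using hj')⟩
  set r := V.max' hVne with hr
  have hrV : r ∈ V := V.max'_mem hVne
  have hrN : r < N := by
    have := (Finset.mem_filter.1 hrV).1; simpa using this
  have hrmin : ∀ j' ∈ Finset.range N, PD N D r ≤ PD N D j' := (Finset.mem_filter.1 hrV).2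
  refine ⟨r, hrN, goodA_of_window h1 hN ?_⟩
  intro j hj hjle
  by_cases hjN : j < N
  · have hle : PD N D r ≤ PD N D j := hrmin j (by simpa using hjN)
    rcases lt_or_eq_of_le hle with h | h
    · exact h
    · exfalso
      have hjV : j ∈ V := by
        refine Finset.mem_filter.2 ⟨by simpa using hjN, ?_⟩
        intro j' hj'; rw [← h]; exact hrmin j' hj'
      have := V.le_max' j hjV
      omega
  · have hjN' : j - N < N := by omega
    have hle : PD N D r ≤ PD N D (j - N) := hrmin _ (by simp; omega)
    have hshift := PD_shift h1 (j - N)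
    have hrw : j - N + N = j := by omega
    rw [hrw] at hshift
    omega

lemma goodA_unique (h1 : PD N D N = 1) (hN : 0 < N) {r r' : ℕ}
    (hr : r < N) (hr' : r' < N) (hg : GoodA N D r) (hg' : GoodA N D r') : r = r' := by
  by_contra hne
  wlog hlt : r < r' generalizing r r'
  · exact this hr' hr hg' hg (Ne.symm hne) (by omega)
  have h2 := hg r' hlt
  have h3 := hg' (r + N) (by omega)
  have h4 := PD_shift h1 r
  omega

end CL2

section Rot
variable {N : ℕ} {D : Finset ℕ}

def rotD (N s : ℕ) (D : Finset ℕ) : Finset ℕ := D.image (fun x => (x + s) % N)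

lemma rotD_subset (hN : 0 < N) (s : ℕ) : rotD N s D ⊆ Finset.range N := by
  intro y hy
  simp only [rotD, Finset.mem_image] at hy
  obtain ⟨x, _, rfl⟩ := hy
  simpa using Nat.mod_lt _ hN

lemma rotD_rotD (hD : D ⊆ Finset.range N) {a b : ℕ} (hab : (a + b) % N = 0) :
    rotD N b (rotD N a D) = D := by
  unfold rotD
  rw [Finset.image_image]
  have : ∀ x ∈ D, ((x + a) % N + b) % N = x := by
    intro x hx
    have hx' : x < N := by simpa using hD hx
    rw [Nat.mod_add_mod]
    have : x + a + b = x + (a + b) := by ring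
    rw [this, Nat.add_mod, hab, Nat.add_zero]
    simp [Nat.mod_eq_of_lt hx']
  calc D.image _ = D.image id := Finset.image_congr (by intro x hx; simp [this x hx])
    _ = D := Finset.image_id

lemma rotD_card (hN : 0 < N) (hD : D ⊆ Finset.range N) {a b : ℕ} (hab : (a + b) % N = 0) :
    (rotD N a D).card = D.card := by
  have h1 : (rotD N b (rotD N a D)).card ≤ (rotD N a D).card := Finset.card_image_le
  rw [rotD_rotD hD hab] at h1
  exact le_antisymm Finset.card_image_le h1

lemma mem_rotD_iff (hD : D ⊆ Finset.range N) {r : ℕ} (hr : r ≤ N) (hN : 0 < N) (i : ℕ) :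
    i % N ∈ rotD N (N - r) D ↔ (r + i) % N ∈ D := by
  constructor
  · rintro h
    simp only [rotD, Finset.mem_image] at h
    obtain ⟨x, hx, hxe⟩ := h
    have hx' : x < N := by simpa using hD hx
    have key : (r + (x + (N - r)) % N) % N = x := by
      rw [Nat.add_mod_mod]
      have he : r + (x + (N - r)) = x + N := by omega
      rw [he, Nat.add_mod_right, Nat.mod_eq_of_lt hx']
    rw [hxe] at key
    have : (r + i) % N = x := by rw [← Nat.add_mod_mod]; exact key
    rwa [this]
  · intro h
    simp only [rotD, Finset.mem_image]
    refine ⟨(r + i) % N, h, ?_⟩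
    rw [Nat.mod_add_mod]
    have : r + i + (N - r) = i + N := by omega
    rw [this, Nat.add_mod_right]

end Rot

section Rot2
variable {N : ℕ} {D : Finset ℕ}

lemma stepD_rotD (hD : D ⊆ Finset.range N) {r : ℕ} (hr : r ≤ N) (hN : 0 < N) (i : ℕ) :
    stepD N (rotD N (N - r) D) i = stepD N D (r + i) := by
  unfold stepD
  rw [if_congr (mem_rotD_iff hD hr hN i) rfl rfl]

lemma PD_rotD (hD : D ⊆ Finset.range N) {r : ℕ} (hr : r ≤ N) (hN : 0 < N) (j : ℕ) :
    PD N (rotD N (N - r) D) j = PD N D (r + j) - PD N D r := by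
  induction j with
  | zero => simp [PD]
  | succ j ih =>
      rw [PD_succ, ih, stepD_rotD hD hr hN, ← Nat.add_assoc, PD_succ N D (r + j)]
      ring

lemma goodA_rotD (hD : D ⊆ Finset.range N) {r : ℕ} (hr : r ≤ N) (hN : 0 < N) :
    GoodA N (rotD N (N - r) D) 0 ↔ GoodA N D r := by
  constructor
  · intro h j hj
    have := h (j - r) (by omega)
    rw [PD_rotD hD hr hN, PD_rotD hD hr hN] at this
    simp only [Nat.add_zero] at this
    have hrw : r + (j - r) = j := by omega
    rw [hrw] at this
    omega
  · intro h j hj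
    rw [PD_rotD hD hr hN, PD_rotD hD hr hN]
    simp only [Nat.add_zero]
    have := h (r + j) (by omega)
    omega

end Rot2

section Count

lemma card_goodA_filter (N K : ℕ) (hN : 0 < N) (hNK : 2 * N = 3 * K + 1) :
    N * (((Finset.range N).powersetCard K).filter (fun D => GoodA N D 0)).card
      = N.choose K := by
  classical
  set S := (Finset.range N).powersetCard K with hS
  have hsum1 : ∀ D ∈ S, PD N D N = 1 := by
    intro D hD
    rw [Finset.mem_powersetCard] at hD
    rw [PD_N N D hD.1, hD.2]
    push_cast
    have : (2 * N : ℤ) = 3 * K + 1 := by exact_mod_cast hNK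
    omega
  have key : ∀ D ∈ S, ((Finset.range N).filter (fun r => GoodA N D r)).card = 1 := by
    intro D hD
    rw [Finset.card_eq_one]
    obtain ⟨r, hrN, hg⟩ := exists_goodA (hsum1 D hD) hN
    refine ⟨r, ?_⟩
    ext r'
    simp only [Finset.mem_filter, Finset.mem_range, Finset.mem_singleton]
    constructor
    · rintro ⟨h1, h2⟩; exact goodA_unique (hsum1 D hD) hN h1 hrN h2 hg
    · rintro rfl; exact ⟨hrN, hg⟩
  have hdouble : ∑ D ∈ S, ((Finset.range N).filter (fun r => GoodA N D r)).card
      = S.card := by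
    rw [Finset.sum_congr rfl key]; simp
  have hswap : ∑ D ∈ S, ((Finset.range N).filter (fun r => GoodA N D r)).card
      = ∑ r ∈ Finset.range N, (S.filter (fun D => GoodA N D r)).card := by
    simp only [Finset.card_filter]
    rw [Finset.sum_comm]
  have hfix : ∀ r ∈ Finset.range N, (S.filter (fun D => GoodA N D r)).card
      = (S.filter (fun D => GoodA N D 0)).card := by
    intro r hr
    rw [Finset.mem_range] at hr
    apply Finset.card_bij (fun D _ => rotD N (N - r) D)
    · intro D hD
      rw [Finset.mem_filter] at hD ⊢
      obtain ⟨hDS, hDg⟩ := hD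
      rw [Finset.mem_powersetCard] at hDS
      refine ⟨Finset.mem_powersetCard.2 ⟨rotD_subset hN _, ?_⟩, ?_⟩
      · rw [rotD_card hN hDS.1 (a := N - r) (b := r) (by simp [Nat.sub_add_cancel hr.le]), hDS.2]
      · exact (goodA_rotD hDS.1 hr.le hN).2 hDg
    · intro D hD D' hD' heq
      rw [Finset.mem_filter, Finset.mem_powersetCard] at hD hD'
      have h1 := rotD_rotD hD.1.1 (a := N - r) (b := r) (by simp [Nat.sub_add_cancel hr.le])
      have h2 := rotD_rotD hD'.1.1 (a := N - r) (b := r) (by simp [Nat.sub_add_cancel hr.le])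
      rw [← h1, ← h2, heq]
    · intro D' hD'
      rw [Finset.mem_filter, Finset.mem_powersetCard] at hD'
      refine ⟨rotD N r D', ?_, ?_⟩
      · have hsub : rotD N r D' ⊆ Finset.range N := rotD_subset hN _
        have hcard : (rotD N r D').card = D'.card := by
          apply rotD_card hN hD'.1.1 (a := r) (b := N - r)
          simp [Nat.add_sub_cancel' hr.le]
        have hback : rotD N (N - r) (rotD N r D') = D' := by
          apply rotD_rotD hD'.1.1
          simp [Nat.add_sub_cancel' hr.le]
        refine Finset.mem_filter.2 ⟨Finset.mem_powersetCard.2 ⟨hsub, by rw [hcard, hD'.1.2]⟩, ?_⟩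
        rw [← goodA_rotD hsub hr.le hN, hback]
        exact hD'.2
      · apply rotD_rotD hD'.1.1
        simp [Nat.add_sub_cancel' hr.le]
  have h2 : S.card = ∑ r ∈ Finset.range N, (S.filter (fun D => GoodA N D 0)).card := by
    rw [← hdouble, hswap]; exact Finset.sum_congr rfl hfix
  rw [Finset.sum_const, Finset.card_range, smul_eq_mul] at h2
  rw [← h2, hS, Finset.card_powersetCard, Finset.card_range]

end Count

lemma B_card (k : ℕ) (hk : 1 ≤ k) :
    (((Finset.range (3*k-1)).powersetCard (2*k-1)).filter (fun D => GoodA (3*k-1) D 0)).card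
      = (3*k-2).choose (2*k-1) / k := by
  have hN : 0 < 3*k-1 := by omega
  have h1 := card_goodA_filter (3*k-1) (2*k-1) hN (by omega)
  set B := (((Finset.range (3*k-1)).powersetCard (2*k-1)).filter
    (fun D => GoodA (3*k-1) D 0)).card with hB
  have hsymm1 : (3*k-1).choose (2*k-1) = (3*k-1).choose k := by
    rw [← Nat.choose_symm (by omega : 2*k-1 ≤ 3*k-1)]
    congr 1; omega
  have hsymm2 : (3*k-2).choose (k-1) = (3*k-2).choose (2*k-1) := by
    rw [← Nat.choose_symm (by omega : k-1 ≤ 3*k-2)]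
    congr 1; omega
  have hid := Nat.add_one_mul_choose_eq (3*k-2) (k-1)
  have e1 : Nat.succ (3*k-2) = 3*k-1 := by omega
  have e2 : (k-1) + 1 = k := by omega
  rw [← Nat.succ_eq_add_one (k-1), ← Nat.succ_eq_add_one, e1] at hid
  simp only [Nat.succ_eq_add_one] at hid
  rw [e2] at hid
  -- hid : (3*k-1) * (3*k-2).choose (k-1) = (3*k-1).choose k * k
  have key : (3*k-2).choose (2*k-1) = B * k := by
    have h2 : k * ((3*k-1) * B) = k * (3*k-1).choose (2*k-1) := by rw [h1]
    have h3 : (3*k-1) * ((3*k-2).choose (2*k-1)) = (3*k-1) * (B * k) := by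
      rw [← hsymm2]
      calc (3*k-1) * (3*k-2).choose (k-1) = (3*k-1).choose k * k := hid
        _ = (3*k-1).choose (2*k-1) * k := by rw [hsymm1]
        _ = (3*k-1) * B * k := by rw [← h1]
        _ = (3*k-1) * (B * k) := by ring
    exact Nat.eq_of_mul_eq_mul_left hN h3
  rw [key, Nat.mul_div_cancel _ (by omega : 0 < k)]

section Bridge
variable {N : ℕ} {D : Finset ℕ}

lemma PD_formula (hD : D ⊆ Finset.range N) :
    ∀ j, j ≤ N → PD N D j = 2*j - 3*((D ∩ Finset.range j).card) := by
  intro j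
  induction j with
  | zero => simp [PD]
  | succ j ih =>
      intro hj
      rw [PD_succ, ih (by omega)]
      have hjN : j < N := by omega
      have hstep : stepD N D j = if j ∈ D then (-1 : ℤ) else 2 := by
        simp [stepD, Nat.mod_eq_of_lt hjN]
      have hrange : Finset.range (j+1) = insert j (Finset.range j) := Finset.range_add_one
      by_cases hjD : j ∈ D
      · have : D ∩ Finset.range (j+1) = insert j (D ∩ Finset.range j) := by
          rw [hrange, Finset.inter_insert_of_mem hjD]
        rw [this, hstep, if_pos hjD,
          Finset.card_insert_of_notMem (by simp)]
        push_cast; ring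
      · have : D ∩ Finset.range (j+1) = D ∩ Finset.range j := by
          rw [hrange, Finset.inter_insert_of_notMem hjD]
        rw [this, hstep, if_neg hjD]
        push_cast; ring

lemma goodA_zero_iff (hD : D ⊆ Finset.range N) (hN : 0 < N) (h1 : PD N D N = 1) :
    GoodA N D 0 ↔ ∀ x, 1 ≤ x → x ≤ N → 3 * ((D ∩ Finset.range x).card) < 2 * x := by
  constructor
  · intro h x hx1 hxN
    have := h x (by omega)
    rw [PD_formula hD x hxN] at this
    have h0 : PD N D 0 = 0 := by simp [PD]
    rw [h0] at this
    have : (3 : ℤ) * ((D ∩ Finset.range x).card) < 2 * x := by omega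
    exact_mod_cast this
  · intro h
    apply goodA_of_window h1 hN
    intro j hj hjN
    simp only [Nat.zero_add] at hjN
    have h0 : PD N D 0 = 0 := by simp [PD]
    rw [h0, PD_formula hD j hjN]
    have := h j (by omega) hjN
    have : (3 : ℤ) * ((D ∩ Finset.range j).card) < 2 * j := by exact_mod_cast this
    omega

lemma shift_inter (F : Finset ℕ) (hF : ∀ y ∈ F, 1 ≤ y) (x : ℕ) :
    ((F.image (· - 1)) ∩ Finset.range x).card = (F ∩ Finset.Icc 1 x).card := by
  have hset : (F.image (· - 1)) ∩ Finset.range x = (F ∩ Finset.Icc 1 x).image (· - 1) := by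
    ext y
    simp only [Finset.mem_inter, Finset.mem_image, Finset.mem_range, Finset.mem_Icc]
    constructor
    · rintro ⟨⟨z, hz, rfl⟩, hy⟩
      exact ⟨z, ⟨hz, hF z hz, by have := hF z hz; omega⟩, rfl⟩
    · rintro ⟨z, ⟨hz, h1, h2⟩, rfl⟩
      exact ⟨⟨z, hz, rfl⟩, by omega⟩
  rw [hset]
  apply Finset.card_image_of_injOn
  intro a ha b hb hab
  simp only [Finset.mem_coe, Finset.mem_inter, Finset.mem_Icc] at ha hb
  simp only at hab
  omega

lemma image_sub_add (F : Finset ℕ) (hF : ∀ y ∈ F, 1 ≤ y) :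
    (F.image (· - 1)).image (· + 1) = F := by
  rw [Finset.image_image]
  calc F.image _ = F.image id := Finset.image_congr (by intro x hx; have := hF x hx; simp; omega)
    _ = F := Finset.image_id

lemma image_add_sub (D : Finset ℕ) :
    (D.image (· + 1)).image (· - 1) = D := by
  rw [Finset.image_image]
  calc D.image _ = D.image id := Finset.image_congr (by intro x hx; simp)
    _ = D := Finset.image_id

end Bridge

section StirlingDir

lemma stirling_direction {n : ℕ} {w : ℕ → ℕ} (hw : IsStirling n w) :
    ∃ F : Finset ℕ, MesaSet n w = ↑F ∧ F ⊆ Finset.Icc 1 n ∧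
      ∀ x, 1 ≤ x → x ≤ n → 3 * (F ∩ Finset.Icc 1 x).card < 2 * x := by
  classical
  obtain ⟨hw1, hw2, hw3⟩ := hw
  set Pos := (Finset.Icc 2 (2*n)).filter
    (fun i => i + 2 ≤ 2*n ∧ w (i-1) < w i ∧ w i = w (i+1) ∧ w (i+2) < w i) with hPos
  have hPos_mem : ∀ i, i ∈ Pos ↔ 2 ≤ i ∧ i + 2 ≤ 2*n ∧ w (i-1) < w i ∧
      w i = w (i+1) ∧ w (i+2) < w i := by
    intro i
    simp only [hPos, Finset.mem_filter, Finset.mem_Icc]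
    constructor
    · rintro ⟨⟨h1, h2⟩, h3⟩; exact ⟨h1, h3⟩
    · rintro ⟨h1, h2, h3⟩; exact ⟨⟨h1, by omega⟩, h2, h3⟩
  have hspace : ∀ i ∈ Pos, ∀ i' ∈ Pos, i < i' → i + 3 ≤ i' := by
    intro i hi i' hi' hlt
    rw [hPos_mem] at hi hi'
    by_contra hcon
    have : i' = i + 1 ∨ i' = i + 2 := by omega
    rcases this with rfl | rfl
    · have e1 : i + 1 + 1 = i + 2 := by omega
      rw [e1] at hi'
      omega
    · have e1 : i + 2 - 1 = i + 1 := by omega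
      rw [e1] at hi'
      omega
  have hinj : ∀ i ∈ Pos, ∀ i' ∈ Pos, w i = w i' → i = i' := by
    have key : ∀ i ∈ Pos, ∀ i' ∈ Pos, i < i' → w i = w i' → False := by
      intro i hi i' hi' hlt heq
      have hsp := hspace i hi i' hi' hlt
      rw [hPos_mem] at hi hi'
      have hv := hw2 i (by omega) (by omega)
      have hsub : ({i, i+1, i', i'+1} : Finset ℕ) ⊆
          (Finset.Icc 1 (2*n)).filter (fun j => w j = w i) := by
        intro j hj
        simp only [Finset.mem_insert, Finset.mem_singleton] at hj
        simp only [Finset.mem_filter, Finset.mem_Icc]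
        rcases hj with rfl | rfl | rfl | rfl
        · exact ⟨⟨by omega, by omega⟩, rfl⟩
        · exact ⟨⟨by omega, by omega⟩, hi.2.2.2.1.symm⟩
        · exact ⟨⟨by omega, by omega⟩, heq.symm⟩
        · exact ⟨⟨by omega, by omega⟩, by rw [← hi'.2.2.2.1, heq]⟩
      have hc4 : ({i, i+1, i', i'+1} : Finset ℕ).card = 4 := by
        rw [Finset.card_insert_of_notMem
            (by simp only [Finset.mem_insert, Finset.mem_singleton]; omega),
          Finset.card_insert_of_notMem
            (by simp only [Finset.mem_insert, Finset.mem_singleton]; omega),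
          Finset.card_insert_of_notMem (by simp only [Finset.mem_singleton]; omega),
          Finset.card_singleton]
      have := Finset.card_le_card hsub
      rw [hc4, hw1 (w i) (by omega) (by omega)] at this
      omega
    intro i hi i' hi' heq
    rcases lt_trichotomy i i' with h | h | h
    · exact absurd heq (fun he => key i hi i' hi' h he)
    · exact h
    · exact absurd heq.symm (fun he => key i' hi' i hi h he)
  have hA : ∀ x, 1 ≤ x → x ≤ n →
      ((Finset.Icc 1 (2*n)).filter (fun i => w i ≤ x)).card = 2 * x := by
    intro x hx1 hxn
    have hset : (Finset.Icc 1 (2*n)).filter (fun i => w i ≤ x)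
        = (Finset.Icc 1 x).biUnion (fun v => (Finset.Icc 1 (2*n)).filter (fun i => w i = v)) := by
      ext i
      simp only [Finset.mem_filter, Finset.mem_biUnion, Finset.mem_Icc]
      constructor
      · rintro ⟨hi, hwi⟩
        have := hw2 i (by omega) (by omega)
        exact ⟨w i, ⟨by omega, hwi⟩, hi, rfl⟩
      · rintro ⟨v, ⟨hv1, hv2⟩, hi, rfl⟩
        exact ⟨hi, hv2⟩
    rw [hset, Finset.card_biUnion]
    · rw [Finset.sum_congr rfl (fun v hv => by
        simp only [Finset.mem_Icc] at hv
        exact hw1 v hv.1 (by omega))]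
      rw [Finset.sum_const, Nat.card_Icc, smul_eq_mul]
      omega
    · intro v hv v' hv' hne
      simp only [Finset.disjoint_left, Finset.mem_filter]
      rintro a ⟨_, rfl⟩ ⟨_, h⟩
      exact hne h
  refine ⟨Pos.image w, ?_, ?_, ?_⟩
  · ext m
    simp only [MesaSet, Set.mem_setOf_eq, Finset.coe_image, Set.mem_image, Finset.mem_coe]
    constructor
    · rintro ⟨i, h1, h2, h3, h4, h5, rfl⟩
      exact ⟨i, (hPos_mem i).2 ⟨h1, h2, h3, h4, h5⟩, rfl⟩
    · rintro ⟨i, hi, rfl⟩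
      rw [hPos_mem] at hi
      exact ⟨i, hi.1, hi.2.1, hi.2.2.1, hi.2.2.2.1, hi.2.2.2.2, rfl⟩
  · intro v hv
    simp only [Finset.mem_image] at hv
    obtain ⟨i, hi, rfl⟩ := hv
    rw [hPos_mem] at hi
    have := hw2 i (by omega) (by omega)
    simp only [Finset.mem_Icc]
    omega
  · intro x hx1 hxn
    set Px := Pos.filter (fun i => w i ≤ x) with hPx
    have hcount : ((Pos.image w) ∩ Finset.Icc 1 x).card = Px.card := by
      have hset : (Pos.image w) ∩ Finset.Icc 1 x = Px.image w := by
        ext v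
        simp only [Finset.mem_inter, Finset.mem_image, Finset.mem_Icc, hPx, Finset.mem_filter]
        constructor
        · rintro ⟨⟨i, hi, rfl⟩, hv1, hv2⟩
          exact ⟨i, ⟨hi, hv2⟩, rfl⟩
        · rintro ⟨i, ⟨hi, hile⟩, rfl⟩
          have hi' := (hPos_mem i).1 hi
          have := hw2 i (by omega) (by omega)
          exact ⟨⟨i, hi, rfl⟩, by omega, hile⟩
      rw [hset]
      apply Finset.card_image_of_injOn
      intro a ha b hb hab
      simp only [hPx, Finset.mem_coe, Finset.mem_filter] at ha hb
      exact hinj a ha.1 b hb.1 hab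
    rw [hcount]
    rcases Finset.eq_empty_or_nonempty Px with he | hne
    · rw [he]; simp; omega
    · set i0 := Px.min' hne with hi0
      have hi0Px : i0 ∈ Px := Px.min'_mem hne
      have hi0min : ∀ i ∈ Px, i0 ≤ i := fun i hi => Px.min'_le i hi
      have hPxPos : ∀ i ∈ Px, i ∈ Pos ∧ w i ≤ x := by
        intro i hi; simpa [hPx, Finset.mem_filter] using hi
      set A := (Finset.Icc 1 (2*n)).filter (fun i => w i ≤ x) with hA'
      set U := ((Px ∪ Px.image (· + 1)) ∪ Px.image (· + 2)) ∪ {i0 - 1} with hU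
      have hUsub : U ⊆ A := by
        intro j hj
        simp only [hU, Finset.mem_union, Finset.mem_image, Finset.mem_singleton] at hj
        simp only [hA', Finset.mem_filter, Finset.mem_Icc]
        rcases hj with ((hj | ⟨i, hi, rfl⟩) | ⟨i, hi, rfl⟩) | rfl
        · obtain ⟨hiP, hile⟩ := hPxPos j hj
          have := (hPos_mem j).1 hiP
          exact ⟨⟨by omega, by omega⟩, hile⟩
        · obtain ⟨hiP, hile⟩ := hPxPos i hi
          have h := (hPos_mem i).1 hiP
          exact ⟨⟨by omega, by omega⟩, by rw [← h.2.2.2.1]; exact hile⟩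
        · obtain ⟨hiP, hile⟩ := hPxPos i hi
          have h := (hPos_mem i).1 hiP
          exact ⟨⟨by omega, by omega⟩, by omega⟩
        · obtain ⟨hiP, hile⟩ := hPxPos i0 hi0Px
          have h := (hPos_mem i0).1 hiP
          have e : i0 - 1 + 1 = i0 := by omega
          refine ⟨⟨by omega, by omega⟩, ?_⟩
          have h3 : w (i0 - 1) < w i0 := h.2.2.1
          omega
      have hsp' : ∀ a ∈ Px, ∀ b ∈ Px, a < b → a + 3 ≤ b := by
        intro a ha b hb hab
        exact hspace a (hPxPos a ha).1 b (hPxPos b hb).1 hab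
      have hd1 : Disjoint Px (Px.image (· + 1)) := by
        rw [Finset.disjoint_left]
        rintro a ha hb
        simp only [Finset.mem_image] at hb
        obtain ⟨b, hb, hba⟩ := hb
        try simp only at hba
        rcases lt_trichotomy a b with h | h | h
        · have := hsp' a ha b hb h; omega
        · omega
        · have := hsp' b hb a ha h; omega
      have hd2 : Disjoint (Px ∪ Px.image (· + 1)) (Px.image (· + 2)) := by
        rw [Finset.disjoint_left]
        rintro a ha hb
        simp only [Finset.mem_image] at hb
        obtain ⟨b, hb, hba⟩ := hb
        try simp only at hba
        simp only [Finset.mem_union, Finset.mem_image] at ha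
        rcases ha with ha | ⟨c, hc, hca⟩
        · rcases lt_trichotomy a b with h | h | h
          · have := hsp' a ha b hb h; omega
          · omega
          · have := hsp' b hb a ha h; omega
        · try simp only at hca
          rcases lt_trichotomy c b with h | h | h
          · have := hsp' c hc b hb h; omega
          · omega
          · have := hsp' b hb c hc h; omega
      have hd3 : Disjoint ((Px ∪ Px.image (· + 1)) ∪ Px.image (· + 2)) {i0 - 1} := by
        rw [Finset.disjoint_right]
        rintro a ha hb
        simp only [Finset.mem_singleton] at ha
        subst ha
        have hi0ge : 2 ≤ i0 := by
          have := (hPos_mem i0).1 (hPxPos i0 hi0Px).1; omega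
        simp only [Finset.mem_union, Finset.mem_image] at hb
        rcases hb with (hb | ⟨c, hc, hca⟩) | ⟨c, hc, hca⟩
        · have := hi0min _ hb; omega
        · have := hi0min _ hc; try simp only at hca
          omega
        · have := hi0min _ hc; try simp only at hca
          omega
      have hcardU : U.card = 3 * Px.card + 1 := by
        rw [hU, Finset.card_union_of_disjoint hd3, Finset.card_union_of_disjoint hd2,
          Finset.card_union_of_disjoint hd1,
          Finset.card_image_of_injective _ (add_left_injective 1),
          Finset.card_image_of_injective _ (add_left_injective 2),
          Finset.card_singleton]
        ring
      have hle := Finset.card_le_card hUsub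
      rw [hcardU, hA x hx1 hxn] at hle
      omega

end StirlingDir

section Enum

/-- `enum F t` is the `t`-th smallest element of `F` (1-based), or 0. -/
noncomputable def enum (F : Finset ℕ) (t : ℕ) : ℕ :=
  if h : t - 1 < F.card then F.orderEmbOfFin rfl ⟨t-1, h⟩ else 0

variable {F : Finset ℕ} {t t' : ℕ}

lemma enum_mem (h1 : 1 ≤ t) (h2 : t ≤ F.card) : enum F t ∈ F := by
  rw [enum, dif_pos (by omega)]
  exact F.orderEmbOfFin_mem rfl _

lemma enum_strictMono (h1 : 1 ≤ t) (hlt : t < t') (h2 : t' ≤ F.card) :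
    enum F t < enum F t' := by
  rw [enum, dif_pos (by omega), enum, dif_pos (by omega)]
  exact (F.orderEmbOfFin rfl).strictMono (by simp [Fin.lt_def]; omega)

lemma enum_mono (h1 : 1 ≤ t) (hle : t ≤ t') (h2 : t' ≤ F.card) :
    enum F t ≤ enum F t' := by
  rcases eq_or_lt_of_le hle with rfl | h
  · exact le_refl _
  · exact (enum_strictMono h1 h h2).le

lemma enum_surj {v : ℕ} (hv : v ∈ F) : ∃ t, 1 ≤ t ∧ t ≤ F.card ∧ enum F t = v := by
  have : v ∈ Set.range (F.orderEmbOfFin rfl) := by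
    rw [F.range_orderEmbOfFin rfl]; exact hv
  obtain ⟨i, hi⟩ := this
  refine ⟨i.val + 1, by omega, by have := i.isLt; omega, ?_⟩
  rw [enum, dif_pos (by simpa using i.isLt)]
  simp only [Nat.add_sub_cancel]
  exact hi

lemma enum_inj (h1 : 1 ≤ t) (h2 : t ≤ F.card) (h1' : 1 ≤ t') (h2' : t' ≤ F.card)
    (he : enum F t = enum F t') : t = t' := by
  rcases lt_trichotomy t t' with h | h | h
  · have := enum_strictMono h1 h h2'; omega
  · exact h
  · have := enum_strictMono h1' h h2; omega

lemma enum_filter_le (h1 : 1 ≤ t) (h2 : t ≤ F.card) :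
    (F.filter (· ≤ enum F t)).card = t := by
  have hset : F.filter (· ≤ enum F t) =
      (Finset.Iic (⟨t-1, by omega⟩ : Fin F.card)).image (fun j => F.orderEmbOfFin rfl j) := by
    ext y
    simp only [Finset.mem_filter, Finset.mem_image, Finset.mem_Iic]
    constructor
    · rintro ⟨hy, hle⟩
      have : y ∈ Set.range (F.orderEmbOfFin rfl) := by
        rw [F.range_orderEmbOfFin rfl]; exact hy
      obtain ⟨j, rfl⟩ := this
      refine ⟨j, ?_, rfl⟩
      rw [enum, dif_pos (by omega)] at hle
      exact (F.orderEmbOfFin rfl).le_iff_le.1 hle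
    · rintro ⟨j, hj, rfl⟩
      refine ⟨F.orderEmbOfFin_mem rfl j, ?_⟩
      rw [enum, dif_pos (by omega)]
      exact (F.orderEmbOfFin rfl).le_iff_le.2 hj
  rw [hset, Finset.card_image_of_injective _ (F.orderEmbOfFin rfl).injective,
    Fin.card_Iic]
  simp only [Fin.val_mk]
  omega

lemma enum_filter_lt (h1 : 1 ≤ t) (h2 : t ≤ F.card) :
    (F.filter (· < enum F t)).card = t - 1 := by
  have hset : F.filter (· < enum F t) =
      (Finset.Iio (⟨t-1, by omega⟩ : Fin F.card)).image (fun j => F.orderEmbOfFin rfl j) := by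
    ext y
    simp only [Finset.mem_filter, Finset.mem_image, Finset.mem_Iio]
    constructor
    · rintro ⟨hy, hle⟩
      have : y ∈ Set.range (F.orderEmbOfFin rfl) := by
        rw [F.range_orderEmbOfFin rfl]; exact hy
      obtain ⟨j, rfl⟩ := this
      refine ⟨j, ?_, rfl⟩
      rw [enum, dif_pos (by omega)] at hle
      exact (F.orderEmbOfFin rfl).lt_iff_lt.1 hle
    · rintro ⟨j, hj, rfl⟩
      refine ⟨F.orderEmbOfFin_mem rfl j, ?_⟩
      rw [enum, dif_pos (by omega)]
      exact (F.orderEmbOfFin rfl).lt_iff_lt.2 hj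
  rw [hset, Finset.card_image_of_injective _ (F.orderEmbOfFin rfl).injective,
    Fin.card_Iio]

end Enum

section Construction

noncomputable def wF (k : ℕ) (F : Finset ℕ) : ℕ → ℕ :=
  fun i => if i % 3 = 1 then enum (Finset.Icc 1 (3*k-1) \ F) (((i+2)/3 + 1)/2)
    else enum F ((i+1)/3)

variable {k : ℕ} {F : Finset ℕ}

lemma Ccard (hk : 1 ≤ k) (hFsub : F ⊆ Finset.Icc 1 (3*k-1)) (hFcard : F.card = 2*k-1) :
    (Finset.Icc 1 (3*k-1) \ F).card = k := by
  rw [Finset.card_sdiff_of_subset hFsub, Nat.card_Icc, hFcard]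
  omega

lemma key_lt (hk : 1 ≤ k) (hFsub : F ⊆ Finset.Icc 1 (3*k-1)) (hFcard : F.card = 2*k-1)
    (hCond : ∀ x, 1 ≤ x → x ≤ 3*k-1 → 3*(F ∩ Finset.Icc 1 x).card < 2*x)
    {t : ℕ} (ht1 : 1 ≤ t) (ht2 : t ≤ 2*k-1) :
    enum (Finset.Icc 1 (3*k-1) \ F) (t/2 + 1) < enum F t := by
  set C := Finset.Icc 1 (3*k-1) \ F with hC
  have hCcard : C.card = k := Ccard hk hFsub hFcard
  set mt := enum F t with hmt
  have hmtF : mt ∈ F := enum_mem ht1 (by omega)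
  have hmtb : 1 ≤ mt ∧ mt ≤ 3*k-1 := by
    have := hFsub hmtF; simpa [Finset.mem_Icc] using this
  have hinter : F ∩ Finset.Icc 1 mt = F.filter (· ≤ mt) := by
    ext y
    simp only [Finset.mem_inter, Finset.mem_Icc, Finset.mem_filter]
    constructor
    · rintro ⟨hy, _, h2⟩; exact ⟨hy, h2⟩
    · rintro ⟨hy, h2⟩
      have := hFsub hy; simp only [Finset.mem_Icc] at this
      exact ⟨hy, by omega, h2⟩
  have h3t : 3 * t < 2 * mt := by
    have := hCond mt hmtb.1 hmtb.2
    rwa [hinter, enum_filter_le ht1 (by omega)] at this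
  set j := t/2 + 1 with hj
  have hjk : j ≤ k := by omega
  set cj := enum C j with hcj
  have hcjC : cj ∈ C := enum_mem (by omega) (by omega)
  have hcjF : cj ∉ F := by
    rw [hC, Finset.mem_sdiff] at hcjC; exact hcjC.2
  by_contra hcon
  push_neg at hcon
  have hlt : mt < cj := by
    rcases lt_or_eq_of_le hcon with h | h
    · exact h
    · exact absurd (h ▸ hmtF) hcjF
  -- count elements of C below mt
  have hsub : C.filter (· ≤ mt) ⊆ C.filter (· < cj) := by
    intro y hy
    simp only [Finset.mem_filter] at hy ⊢
    exact ⟨hy.1, by omega⟩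
  have hCcount : (C.filter (· ≤ mt)).card ≤ j - 1 := by
    have := Finset.card_le_card hsub
    rwa [enum_filter_lt (by omega) (by omega)] at this
  have hcover : Finset.Icc 1 mt ⊆ F.filter (· ≤ mt) ∪ C.filter (· ≤ mt) := by
    intro y hy
    simp only [Finset.mem_Icc] at hy
    simp only [Finset.mem_union, Finset.mem_filter, hC, Finset.mem_sdiff, Finset.mem_Icc]
    by_cases hyF : y ∈ F
    · exact Or.inl ⟨hyF, hy.2⟩
    · exact Or.inr ⟨⟨⟨hy.1, by omega⟩, hyF⟩, hy.2⟩
  have hcount : mt ≤ t + (j - 1) := by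
    have h1 := Finset.card_le_card hcover
    have h2 := Finset.card_union_le (F.filter (· ≤ mt)) (C.filter (· ≤ mt))
    rw [Nat.card_Icc] at h1
    rw [enum_filter_le ht1 (by omega)] at h2
    omega
  omega

end Construction

section Construction2
variable {k : ℕ} {F : Finset ℕ}

lemma construction (hk : 1 ≤ k) (hFsub : F ⊆ Finset.Icc 1 (3*k-1)) (hFcard : F.card = 2*k-1)
    (hCond : ∀ x, 1 ≤ x → x ≤ 3*k-1 → 3*(F ∩ Finset.Icc 1 x).card < 2*x) :
    IsStirling (3*k-1) (wF k F) ∧ MesaSet (3*k-1) (wF k F) = ↑F := by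
  classical
  set C := Finset.Icc 1 (3*k-1) \ F with hC
  have hCcard : C.card = k := Ccard hk hFsub hFcard
  have h2n : 2*(3*k-1) = 6*k-2 := by omega
  set w := wF k F with hw
  -- case computations
  have hcaseC : ∀ i, i % 3 = 1 → w i = enum C (((i+2)/3 + 1)/2) := by
    intro i hi; simp [hw, wF, hi, hC]
  have hcaseM : ∀ i, i % 3 ≠ 1 → w i = enum F ((i+1)/3) := by
    intro i hi; simp [hw, wF, hi]
  have hCF : ∀ y ∈ C, y ∉ F := by
    intro y hy; rw [hC, Finset.mem_sdiff] at hy; exact hy.2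
  have hFb : ∀ y ∈ F, 1 ≤ y ∧ y ≤ 3*k-1 := by
    intro y hy; have := hFsub hy; simpa [Finset.mem_Icc] using this
  have hCb : ∀ y ∈ C, 1 ≤ y ∧ y ≤ 3*k-1 := by
    intro y hy; rw [hC, Finset.mem_sdiff, Finset.mem_Icc] at hy; exact hy.1
  have hkey : ∀ t, 1 ≤ t → t ≤ 2*k-1 → enum C (t/2 + 1) < enum F t :=
    fun t h1 h2 => key_lt hk hFsub hFcard hCond h1 h2
  -- position characterization for mesa values
  have hposM : ∀ t, 1 ≤ t → t ≤ 2*k-1 → ∀ i, 1 ≤ i → i ≤ 6*k-2 →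
      (w i = enum F t ↔ (i = 3*t-1 ∨ i = 3*t)) := by
    intro t ht1 ht2 i hi1 hi2
    by_cases hi3 : i % 3 = 1
    · rw [hcaseC i hi3]
      constructor
      · intro h
        exfalso
        have hj : 1 ≤ ((i+2)/3 + 1)/2 ∧ ((i+2)/3 + 1)/2 ≤ k := by omega
        have hcm : enum C (((i+2)/3 + 1)/2) ∈ C := enum_mem hj.1 (by omega)
        have hfm : enum F t ∈ F := enum_mem ht1 (by omega)
        exact hCF _ hcm (h ▸ hfm)
      · intro h; exfalso; omega
    · rw [hcaseM i hi3]
      have hti : 1 ≤ (i+1)/3 ∧ (i+1)/3 ≤ 2*k-1 := by omega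
      constructor
      · intro h
        have := enum_inj hti.1 (by omega) ht1 (by omega) h
        omega
      · intro h
        have : (i+1)/3 = t := by omega
        rw [this]
  have hposC : ∀ j, 1 ≤ j → j ≤ k → ∀ i, 1 ≤ i → i ≤ 6*k-2 →
      (w i = enum C j ↔ (i = 6*j-5 ∨ i = 6*j-2)) := by
    intro j hj1 hj2 i hi1 hi2
    by_cases hi3 : i % 3 = 1
    · rw [hcaseC i hi3]
      have hji : 1 ≤ ((i+2)/3 + 1)/2 ∧ ((i+2)/3 + 1)/2 ≤ k := by omega
      constructor
      · intro h
        have := enum_inj hji.1 (by omega) hj1 (by omega) h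
        omega
      · intro h
        have : ((i+2)/3 + 1)/2 = j := by omega
        rw [this]
    · rw [hcaseM i hi3]
      constructor
      · intro h
        exfalso
        have hti : 1 ≤ (i+1)/3 ∧ (i+1)/3 ≤ 2*k-1 := by omega
        have hfm : enum F ((i+1)/3) ∈ F := enum_mem hti.1 (by omega)
        have hcm : enum C j ∈ C := enum_mem hj1 (by omega)
        exact hCF _ hcm (h ▸ hfm)
      · intro h; exfalso; omega
  -- filters
  have hfiltM : ∀ t, 1 ≤ t → t ≤ 2*k-1 →
      (Finset.Icc 1 (2*(3*k-1))).filter (fun i => w i = enum F t) = {3*t-1, 3*t} := by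
    intro t ht1 ht2
    ext i
    simp only [Finset.mem_filter, Finset.mem_Icc, Finset.mem_insert, Finset.mem_singleton, h2n]
    constructor
    · rintro ⟨⟨h1, h2⟩, h3⟩
      exact (hposM t ht1 ht2 i h1 h2).1 h3
    · intro h
      have hi : 1 ≤ i ∧ i ≤ 6*k-2 := by omega
      exact ⟨⟨hi.1, hi.2⟩, (hposM t ht1 ht2 i hi.1 hi.2).2 h⟩
  have hfiltC : ∀ j, 1 ≤ j → j ≤ k →
      (Finset.Icc 1 (2*(3*k-1))).filter (fun i => w i = enum C j) = {6*j-5, 6*j-2} := by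
    intro j hj1 hj2
    ext i
    simp only [Finset.mem_filter, Finset.mem_Icc, Finset.mem_insert, Finset.mem_singleton, h2n]
    constructor
    · rintro ⟨⟨h1, h2⟩, h3⟩
      exact (hposC j hj1 hj2 i h1 h2).1 h3
    · intro h
      have hi : 1 ≤ i ∧ i ≤ 6*k-2 := by omega
      exact ⟨⟨hi.1, hi.2⟩, (hposC j hj1 hj2 i hi.1 hi.2).2 h⟩
  constructor
  · refine ⟨?_, ?_, ?_⟩
    -- each value appears exactly twice
    · intro v hv1 hv2
      have hvmem : v ∈ Finset.Icc 1 (3*k-1) := by simp [Finset.mem_Icc]; omega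
      by_cases hvF : v ∈ F
      · obtain ⟨t, ht1, ht2, hte⟩ := enum_surj hvF
        rw [← hte, hfiltM t ht1 (by omega)]
        rw [Finset.card_insert_of_notMem (by simp only [Finset.mem_singleton]; omega),
          Finset.card_singleton]
      · have hvC : v ∈ C := by rw [hC, Finset.mem_sdiff]; exact ⟨hvmem, hvF⟩
        obtain ⟨j, hj1, hj2, hje⟩ := enum_surj hvC
        rw [← hje, hfiltC j hj1 (by omega)]
        rw [Finset.card_insert_of_notMem (by simp only [Finset.mem_singleton]; omega),
          Finset.card_singleton]
    -- bounds
    · intro i hi1 hi2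
      rw [h2n] at hi2
      by_cases hi3 : i % 3 = 1
      · rw [hcaseC i hi3]
        exact hCb _ (enum_mem (by omega) (by omega))
      · rw [hcaseM i hi3]
        exact hFb _ (enum_mem (by omega) (by omega))
    -- betweenness
    · intro i j l hi1 hij hjl hl2 hweq
      rw [h2n] at hl2
      by_cases hi3 : i % 3 = 1
      · -- value is a complement letter
        have hji : 1 ≤ ((i+2)/3 + 1)/2 ∧ ((i+2)/3 + 1)/2 ≤ k := by omega
        set j0 := ((i+2)/3 + 1)/2 with hj0
        have hiv : w i = enum C j0 := hcaseC i hi3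
        have hlv : w l = enum C j0 := by rw [← hweq, hiv]
        have hipos := (hposC j0 hji.1 hji.2 i hi1 (by omega)).1 hiv
        have hlpos := (hposC j0 hji.1 hji.2 l (by omega) (by omega)).1 hlv
        have hil : i = 6*j0-5 ∧ l = 6*j0-2 := by omega
        have hjmid : j % 3 ≠ 1 ∧ (j+1)/3 = 2*j0-1 := by omega
        rw [hiv, hcaseM j hjmid.1, hjmid.2]
        have h1 : enum C ((2*j0-1)/2 + 1) < enum F (2*j0-1) := hkey _ (by omega) (by omega)
        have h2 : (2*j0-1)/2 + 1 = j0 := by omega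
        rwa [h2] at h1
      · -- value is a mesa letter: the two copies are adjacent
        exfalso
        have hti : 1 ≤ (i+1)/3 ∧ (i+1)/3 ≤ 2*k-1 := by omega
        set t := (i+1)/3 with ht
        have hiv : w i = enum F t := hcaseM i hi3
        have hlv : w l = enum F t := by rw [← hweq, hiv]
        have hipos := (hposM t hti.1 hti.2 i hi1 (by omega)).1 hiv
        have hlpos := (hposM t hti.1 hti.2 l (by omega) (by omega)).1 hlv
        omega
  · -- Mesa set equals F
    ext v
    simp only [MesaSet, Set.mem_setOf_eq, Finset.mem_coe]
    constructor
    · rintro ⟨i, hi2, hi2n, hlt1, heq1, hlt2, hiv⟩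
      rw [h2n] at hi2n
      by_cases hi3 : i % 3 = 1
      · exfalso
        have hji : 1 ≤ ((i+2)/3 + 1)/2 ∧ ((i+2)/3 + 1)/2 ≤ k := by omega
        have h1 : (i+1) % 3 ≠ 1 := by omega
        have hiv' : w i = enum C (((i+2)/3 + 1)/2) := hcaseC i hi3
        have hinv' : w (i+1) = enum F ((i+1+1)/3) := hcaseM (i+1) h1
        have hcm : enum C (((i+2)/3 + 1)/2) ∈ C := enum_mem hji.1 (by omega)
        have hfm : enum F ((i+1+1)/3) ∈ F := enum_mem (by omega) (by omega)
        rw [hiv', hinv'] at heq1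
        exact hCF _ hcm (heq1 ▸ hfm)
      · by_cases hi0 : i % 3 = 0
        · exfalso
          have h1 : (i+1) % 3 = 1 := by omega
          have hiv' : w i = enum F ((i+1)/3) := hcaseM i hi3
          have hinv' : w (i+1) = enum C (((i+1+2)/3 + 1)/2) := hcaseC (i+1) h1
          have hcm : enum C (((i+1+2)/3 + 1)/2) ∈ C := enum_mem (by omega) (by omega)
          have hfm : enum F ((i+1)/3) ∈ F := enum_mem (by omega) (by omega)
          rw [hiv', hinv'] at heq1
          exact hCF _ hcm (heq1.symm ▸ hfm)
        · have hiv' : w i = enum F ((i+1)/3) := hcaseM i hi3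
          rw [← hiv, hiv']
          exact enum_mem (by omega) (by omega)
    · intro hvF
      obtain ⟨t, ht1, ht2, hte⟩ := enum_surj hvF
      rw [hFcard] at ht2
      refine ⟨3*t-1, by omega, by omega, ?_, ?_, ?_, ?_⟩
      · -- w (3t-2) < w (3t-1)
        have h1 : (3*t-1-1) % 3 = 1 := by omega
        have h2 : (3*t-1) % 3 ≠ 1 := by omega
        rw [hcaseC _ h1, hcaseM _ h2]
        have e1 : ((3*t-1-1+2)/3 + 1)/2 = (t+1)/2 := by omega
        have e2 : (3*t-1+1)/3 = t := by omega
        rw [e1, e2]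
        calc enum C ((t+1)/2) ≤ enum C (t/2 + 1) :=
              enum_mono (by omega) (by omega) (by omega)
          _ < enum F t := hkey t ht1 ht2
      · -- w (3t-1) = w (3t)
        have h2 : (3*t-1) % 3 ≠ 1 := by omega
        have h3 : (3*t-1+1) % 3 ≠ 1 := by omega
        rw [hcaseM _ h2, hcaseM _ h3]
        have e2 : (3*t-1+1)/3 = t := by omega
        have e3 : (3*t-1+1+1)/3 = t := by omega
        rw [e2, e3]
      · -- w (3t+1) < w (3t-1)
        have h2 : (3*t-1) % 3 ≠ 1 := by omega
        have h4 : (3*t-1+2) % 3 = 1 := by omega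
        rw [hcaseM _ h2, hcaseC _ h4]
        have e2 : (3*t-1+1)/3 = t := by omega
        have e4 : ((3*t-1+2+2)/3 + 1)/2 = t/2 + 1 := by omega
        rw [e2, e4]
        exact hkey t ht1 ht2
      · have h2 : (3*t-1) % 3 ≠ 1 := by omega
        rw [hcaseM _ h2]
        have e2 : (3*t-1+1)/3 = t := by omega
        rw [e2, hte]

end Construction2

theorem count_maximal_mesa_sets (k : ℕ) (hk : 1 ≤ k) :
    {M | M ∈ AMS (3*k-1) ∧ M.ncard = 2*k - 1}.ncard =
      (3*k - 2).choose (2*k - 1) / k := by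
  classical
  have hN : 0 < 3*k-1 := by omega
  set Bf := ((Finset.range (3*k-1)).powersetCard (2*k-1)).filter
    (fun D => GoodA (3*k-1) D 0) with hBf
  have hBsub : ∀ D ∈ Bf, D ⊆ Finset.range (3*k-1) ∧ D.card = 2*k-1 ∧ GoodA (3*k-1) D 0 := by
    intro D hD
    rw [hBf, Finset.mem_filter, Finset.mem_powersetCard] at hD
    exact ⟨hD.1.1, hD.1.2, hD.2⟩
  have hseteq : {M | M ∈ AMS (3*k-1) ∧ M.ncard = 2*k - 1}
      = (fun D : Finset ℕ => (↑(D.image (· + 1)) : Set ℕ)) '' ↑Bf := by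
    ext M
    simp only [Set.mem_setOf_eq, Set.mem_image, Finset.mem_coe]
    constructor
    · rintro ⟨⟨w, hw, hMw⟩, hcard⟩
      obtain ⟨F, hMF, hFsub, hFcond⟩ := stirling_direction hw
      rw [hMw] at hMF
      subst hMF
      rw [Set.ncard_coe_finset] at hcard
      have hF1 : ∀ y ∈ F, 1 ≤ y := by
        intro y hy; have := hFsub hy; simp only [Finset.mem_Icc] at this; omega
      set D := F.image (· - 1) with hD
      have hPD1 : D ⊆ Finset.range (3*k-1) := by
        intro y hy
        simp only [hD, Finset.mem_image] at hy
        obtain ⟨z, hz, rfl⟩ := hy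
        have := hFsub hz; simp only [Finset.mem_Icc] at this
        simp only [Finset.mem_range]; omega
      have hPD2 : D.card = 2*k-1 := by
        rw [hD, Finset.card_image_of_injOn, hcard]
        intro a ha b hb hab
        have := hF1 a ha; have := hF1 b hb
        simp only at hab; omega
      have h1 : PD (3*k-1) D (3*k-1) = 1 := by
        rw [PD_N _ _ hPD1, hPD2]; push_cast; omega
      refine ⟨D, ?_, ?_⟩
      · rw [hBf, Finset.mem_filter, Finset.mem_powersetCard]
        refine ⟨⟨hPD1, hPD2⟩, ?_⟩
        rw [goodA_zero_iff hPD1 hN h1]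
        intro x hx1 hx2
        rw [hD, shift_inter F hF1 x]
        exact hFcond x hx1 hx2
      · rw [hD, image_sub_add F hF1]
    · rintro ⟨D, hD, rfl⟩
      obtain ⟨hD1, hD2, hD3⟩ := hBsub D hD
      set F := D.image (· + 1) with hF
      have hFsub : F ⊆ Finset.Icc 1 (3*k-1) := by
        intro y hy
        simp only [hF, Finset.mem_image] at hy
        obtain ⟨z, hz, rfl⟩ := hy
        have := hD1 hz; simp only [Finset.mem_range] at this
        simp only [Finset.mem_Icc]; omega
      have hFcard : F.card = 2*k-1 := by
        rw [hF, Finset.card_image_of_injective _ (add_left_injective 1), hD2]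
      have h1 : PD (3*k-1) D (3*k-1) = 1 := by
        rw [PD_N _ _ hD1, hD2]; push_cast; omega
      have hFcond : ∀ x, 1 ≤ x → x ≤ 3*k-1 → 3*(F ∩ Finset.Icc 1 x).card < 2*x := by
        intro x hx1 hx2
        have hF1 : ∀ y ∈ F, 1 ≤ y := by
          intro y hy; have := hFsub hy; simp only [Finset.mem_Icc] at this; omega
        have hgood := (goodA_zero_iff hD1 hN h1).1 hD3 x hx1 hx2
        rw [← shift_inter F hF1 x]
        have he : F.image (· - 1) = D := by rw [hF, image_add_sub]
        rwa [he]
      obtain ⟨hstir, hmesa⟩ := construction hk hFsub hFcard hFcond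
      exact ⟨⟨wF k F, hstir, hmesa⟩, by rw [Set.ncard_coe_finset, hFcard]⟩
  rw [hseteq]
  rw [Set.ncard_image_of_injOn, Set.ncard_coe_finset]
  · exact B_card k hk
  · intro D hD D' hD' heq
    simp only [Finset.mem_coe] at hD hD'
    have h1 : D.image (· + 1) = D'.image (· + 1) := Finset.coe_injective heq
    have := congrArg (fun s : Finset ℕ => s.image (· - 1)) h1
    simpa [image_add_sub] using this
end

section
/- The number of subsets M of {1,…,3k−1} of size 2k−1 satisfying |M ∩ [1,x]| ≤ (2x−1)/3 for all x ∈ M equals (1/k)·binom(3k−2, 2k−1), for every k ≥ 1. -/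
open Finset

section Raney

variable (n : ℕ) [NeZero n]

def stepf (S : Finset (ZMod n)) (i : ℕ) : ℤ :=
  if (i : ZMod n) ∈ S then -1 else 2

def psum (S : Finset (ZMod n)) (m : ℕ) : ℤ :=
  ∑ i ∈ Finset.range m, stepf n S i

def GoodR (S : Finset (ZMod n)) (j : ℕ) : Prop :=
  ∀ t ∈ Finset.Icc 1 n, psum n S j < psum n S (j + t)

instance (S : Finset (ZMod n)) (j : ℕ) : Decidable (GoodR n S j) := by
  unfold GoodR; infer_instance

variable {n}

lemma psum_zero (S : Finset (ZMod n)) : psum n S 0 = 0 := by simp [psum]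

lemma psum_succ (S : Finset (ZMod n)) (m : ℕ) :
    psum n S (m + 1) = psum n S m + stepf n S m := Finset.sum_range_succ _ _

lemma stepf_add_n (S : Finset (ZMod n)) (i : ℕ) :
    stepf n S (i + n) = stepf n S i := by
  simp [stepf, Nat.cast_add, ZMod.natCast_self]

lemma psum_n (S : Finset (ZMod n)) :
    psum n S n = 2 * n - 3 * (S.card : ℤ) := by
  have h1 : psum n S n = ∑ z : ZMod n, (if z ∈ S then (-1 : ℤ) else 2) := by
    refine Finset.sum_nbij' (fun i => ((i : ZMod n))) (fun z => z.val) ?_ ?_ ?_ ?_ ?_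
    · intro a _; exact Finset.mem_univ _
    · intro z _; exact Finset.mem_range.2 (ZMod.val_lt z)
    · intro a ha; exact ZMod.val_cast_of_lt (Finset.mem_range.1 ha)
    · intro z _; exact ZMod.natCast_rightInverse z
    · intro a _; rfl
  have h2 : ∀ z : ZMod n, (if z ∈ S then (-1 : ℤ) else 2)
      = 2 - 3 * (if z ∈ S then 1 else 0) := by
    intro z; by_cases h : z ∈ S <;> simp [h]
  rw [h1]
  simp only [h2]
  rw [Finset.sum_sub_distrib, Finset.sum_const, ← Finset.mul_sum, Finset.sum_boole]
  have : Finset.filter (fun z => z ∈ S) Finset.univ = S := by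
    ext z; simp
  rw [this]
  simp [Finset.card_univ, ZMod.card, mul_comm]

lemma psum_add_n {S : Finset (ZMod n)} (hc : psum n S n = 1) (m : ℕ) :
    psum n S (m + n) = psum n S m + 1 := by
  induction m with
  | zero => simp [psum_zero, hc]
  | succ m ih =>
      have : m + 1 + n = (m + n) + 1 := by omega
      rw [this, psum_succ, ih, stepf_add_n, psum_succ]; ring

lemma psum_mul_add {S : Finset (ZMod n)} (hc : psum n S n = 1) (q u : ℕ) :
    psum n S (q * n + u) = psum n S u + q := by
  induction q with
  | zero => simp
  | succ q ih =>
      have : (q + 1) * n + u = (q * n + u) + n := by ring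
      rw [this, psum_add_n hc, ih]; push_cast; ring

lemma good_ext {S : Finset (ZMod n)} (hc : psum n S n = 1) {j : ℕ}
    (hg : GoodR n S j) : ∀ m, j < m → psum n S j < psum n S m := by
  intro m
  induction m using Nat.strong_induction_on with
  | _ m ih =>
    intro hm
    by_cases h : m ≤ j + n
    · have ht : m - j ∈ Finset.Icc 1 n := by simp; omega
      have := hg _ ht
      have : j + (m - j) = m := by omega
      rw [this] at *
      exact hg _ ht |>.trans_eq (by rw [show j + (m - j) = m by omega])
    · have hn : 0 < n := Nat.pos_of_ne_zero (NeZero.ne n)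
      have h1 : m - n < m := by omega
      have h2 : j < m - n := by omega
      have := ih (m - n) h1 h2
      have h3 : psum n S m = psum n S (m - n) + 1 := by
        rw [← psum_add_n hc (m - n), Nat.sub_add_cancel (by omega)]
      omega

lemma raney_exists {S : Finset (ZMod n)} (hc : psum n S n = 1) :
    ∃ j < n, GoodR n S j := by
  have hn : 0 < n := Nat.pos_of_ne_zero (NeZero.ne n)
  obtain ⟨j0, hj0, hj0min⟩ := Finset.exists_min_image (Finset.range n) (psum n S)
    ⟨0, Finset.mem_range.2 hn⟩
  set T := (Finset.range n).filter (fun j => ∀ j' ∈ Finset.range n, psum n S j ≤ psum n S j') with hT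
  have hTne : T.Nonempty := ⟨j0, Finset.mem_filter.2 ⟨hj0, hj0min⟩⟩
  set r := T.max' hTne with hr
  have hrT : r ∈ T := T.max'_mem hTne
  obtain ⟨hrn, hrmin⟩ := Finset.mem_filter.1 hrT
  have hrn' : r < n := Finset.mem_range.1 hrn
  refine ⟨r, hrn', ?_⟩
  intro t ht
  obtain ⟨ht1, ht2⟩ := Finset.mem_Icc.1 ht
  by_cases h : r + t < n
  · have h1 : psum n S r ≤ psum n S (r + t) := hrmin _ (Finset.mem_range.2 h)
    rcases lt_or_eq_of_le h1 with h2 | h2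
    · exact h2
    · exfalso
      have : r + t ∈ T := Finset.mem_filter.2 ⟨Finset.mem_range.2 h, by
        intro j' hj'; rw [← h2]; exact hrmin j' hj'⟩
      have := T.le_max' _ this
      omega
  · have h1 : r + t - n < n := by omega
    have h2 : psum n S r ≤ psum n S (r + t - n) := hrmin _ (Finset.mem_range.2 h1)
    have h3 : psum n S (r + t) = psum n S (r + t - n) + 1 := by
      rw [← psum_add_n hc (r + t - n), Nat.sub_add_cancel (by omega)]
    omega

lemma raney_unique {S : Finset (ZMod n)} (hc : psum n S n = 1) {j1 j2 : ℕ}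
    (h1 : j1 < n) (h2 : j2 < n) (g1 : GoodR n S j1) (g2 : GoodR n S j2) : j1 = j2 := by
  rcases lt_trichotomy j1 j2 with h | h | h
  · exfalso
    have a1 : psum n S j1 < psum n S j2 := good_ext hc g1 j2 h
    have a2 : psum n S j2 < psum n S (j1 + n) := good_ext hc g2 (j1 + n) (by omega)
    have a3 : psum n S (j1 + n) = psum n S j1 + 1 := psum_add_n hc j1
    omega
  · exact h
  · exfalso
    have a1 : psum n S j2 < psum n S j1 := good_ext hc g2 j1 h
    have a2 : psum n S j1 < psum n S (j2 + n) := good_ext hc g1 (j2 + n) (by omega)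
    have a3 : psum n S (j2 + n) = psum n S j2 + 1 := psum_add_n hc j2
    omega

end Raney
open Finset
section Rot
set_option linter.unusedSectionVars false
variable {n : ℕ} [NeZero n]

def rotS (t : ZMod n) (S : Finset (ZMod n)) : Finset (ZMod n) := S.image (· + t)

lemma mem_rotS {t : ZMod n} {S : Finset (ZMod n)} {z : ZMod n} :
    z ∈ rotS t S ↔ z - t ∈ S := by
  simp only [rotS, Finset.mem_image]
  constructor
  · rintro ⟨a, ha, rfl⟩; simpa using ha
  · intro h; exact ⟨z - t, h, by ring⟩

lemma card_rotS (t : ZMod n) (S : Finset (ZMod n)) : (rotS t S).card = S.card :=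
  Finset.card_image_of_injective _ (add_left_injective t)

lemma rotS_rotS (t : ZMod n) (S : Finset (ZMod n)) : rotS (-t) (rotS t S) = S := by
  ext z; simp [mem_rotS]

lemma stepf_rotS (t : ZMod n) (S : Finset (ZMod n)) (i : ℕ) :
    stepf n (rotS t S) i = stepf n S (i + (-t).val) := by
  unfold stepf
  have : ((i + (-t).val : ℕ) : ZMod n) = (i : ZMod n) - t := by
    push_cast [ZMod.natCast_rightInverse (-t)]
    ring
  simp only [this, mem_rotS]

lemma psum_rotS (t : ZMod n) (S : Finset (ZMod n)) (m : ℕ) :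
    psum n (rotS t S) m = psum n S (m + (-t).val) - psum n S ((-t).val) := by
  induction m with
  | zero => simp [psum_zero]
  | succ m ih =>
      rw [psum_succ, ih, stepf_rotS, show m + 1 + (-t).val = (m + (-t).val) + 1 by omega,
        psum_succ]
      ring

lemma good_rotS {S : Finset (ZMod n)} (hc : psum n S n = 1) {j : ℕ} (hj : j < n) :
    GoodR n (rotS (j : ZMod n) S) j ↔ GoodR n S 0 := by
  set s := (-(j : ZMod n)).val with hs
  have hdvd : n ∣ (j + s) := by
    have : ((j + s : ℕ) : ZMod n) = 0 := by
      push_cast [hs, ZMod.natCast_rightInverse (-(j : ZMod n))]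
      ring
    exact (ZMod.natCast_eq_zero_iff _ _).1 this
  obtain ⟨q, hq0⟩ := hdvd
  have hq : j + s = q * n := by rw [hq0, mul_comm]
  have key : ∀ u : ℕ, psum n (rotS (j : ZMod n) S) (j + u) = psum n S u + q - psum n S s := by
    intro u
    rw [psum_rotS, show j + u + s = q * n + u by omega, psum_mul_add hc]
  have k0 : psum n (rotS (j : ZMod n) S) j = psum n S 0 + q - psum n S s := by
    have := key 0; rwa [Nat.add_zero] at this
  constructor
  · intro hg t ht
    have h1 := hg t ht
    rw [key t, k0] at h1
    simp only [Nat.zero_add]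
    linarith
  · intro hg t ht
    rw [key t, k0]
    have h2 := hg t ht
    simp only [Nat.zero_add, psum_zero] at h2
    simp only [psum_zero]
    linarith

end Rot
open Finset
section Count
set_option linter.unusedSectionVars false
variable {n c : ℕ} [NeZero n]

lemma psum_eq_one (h : 2 * n = 3 * c + 1) {S : Finset (ZMod n)} (hS : S.card = c) :
    psum n S n = 1 := by
  rw [psum_n, hS]; push_cast; omega

lemma count_master (h : 2 * n = 3 * c + 1) :
    n * (((Finset.powersetCard c (Finset.univ : Finset (ZMod n))).filter
      (fun S => GoodR n S 0)).card) = n.choose c := by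
  set Pn := Finset.powersetCard c (Finset.univ : Finset (ZMod n)) with hPn
  have hcard : ∀ S ∈ Pn, S.card = c := fun S hS => Finset.mem_powersetCard_univ.1 hS
  have step1 : Pn.card = ∑ S ∈ Pn, ((Finset.range n).filter (fun j => GoodR n S j)).card := by
    rw [Finset.card_eq_sum_ones]
    refine Finset.sum_congr rfl ?_
    intro S hS
    have hc1 : psum n S n = 1 := psum_eq_one h (hcard S hS)
    obtain ⟨r, hr, hg⟩ := raney_exists hc1
    symm
    rw [Finset.card_eq_one]
    refine ⟨r, ?_⟩
    rw [Finset.eq_singleton_iff_unique_mem]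
    constructor
    · exact Finset.mem_filter.2 ⟨Finset.mem_range.2 hr, hg⟩
    · intro j hj
      obtain ⟨hj1, hj2⟩ := Finset.mem_filter.1 hj
      exact raney_unique hc1 (Finset.mem_range.1 hj1) hr hj2 hg
  have fib : ∀ j ∈ Finset.range n, (Pn.filter (fun S => GoodR n S j)).card
      = (Pn.filter (fun S => GoodR n S 0)).card := by
    intro j hj
    have hjn := Finset.mem_range.1 hj
    symm
    refine Finset.card_bij' (fun S _ => rotS (j : ZMod n) S)
      (fun S _ => rotS (-(j : ZMod n)) S) ?_ ?_ ?_ ?_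
    · intro S hS
      obtain ⟨hS1, hS2⟩ := Finset.mem_filter.1 hS
      have hc1 : psum n S n = 1 := psum_eq_one h (hcard S hS1)
      refine Finset.mem_filter.2 ⟨?_, ?_⟩
      · exact Finset.mem_powersetCard_univ.2 (by rw [card_rotS]; exact hcard S hS1)
      · exact (good_rotS hc1 hjn).2 hS2
    · intro S hS
      obtain ⟨hS1, hS2⟩ := Finset.mem_filter.1 hS
      have hmem : rotS (-(j : ZMod n)) S ∈ Pn :=
        Finset.mem_powersetCard_univ.2 (by rw [card_rotS]; exact hcard S hS1)
      refine Finset.mem_filter.2 ⟨hmem, ?_⟩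
      have hc1 : psum n (rotS (-(j : ZMod n)) S) n = 1 :=
        psum_eq_one h (Finset.mem_powersetCard_univ.1 hmem)
      have hSeq : rotS (j : ZMod n) (rotS (-(j : ZMod n)) S) = S := by
        have := rotS_rotS (-(j : ZMod n)) S
        rwa [neg_neg] at this
      have := (good_rotS hc1 hjn)
      rw [hSeq] at this
      exact this.1 hS2
    · intro S _; exact rotS_rotS _ _
    · intro S _
      have := rotS_rotS (-(j : ZMod n)) S
      rwa [neg_neg] at this
  have step2 : Pn.card = n * (Pn.filter (fun S => GoodR n S 0)).card := by
    rw [step1]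
    have e1 : ∀ S ∈ Pn, ((Finset.range n).filter (fun j => GoodR n S j)).card
        = ∑ j ∈ Finset.range n, if GoodR n S j then 1 else 0 :=
      fun S _ => Finset.card_filter _ _
    rw [Finset.sum_congr rfl e1, Finset.sum_comm]
    have e2 : ∀ j ∈ Finset.range n, (∑ S ∈ Pn, if GoodR n S j then 1 else 0)
        = (Pn.filter (fun S => GoodR n S 0)).card := by
      intro j hj
      rw [← Finset.card_filter]
      exact fib j hj
    rw [Finset.sum_congr rfl e2, Finset.sum_const, Finset.card_range, smul_eq_mul]
  rw [← step2, hPn, Finset.card_powersetCard, Finset.card_univ, ZMod.card]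

end Count
open Finset
section Transl
set_option linter.unusedSectionVars false
variable {n : ℕ} [NeZero n]

lemma card_inter_succ (M : Finset ℕ) (t : ℕ) :
    (M ∩ Finset.Icc 1 (t + 1)).card
      = (M ∩ Finset.Icc 1 t).card + (if t + 1 ∈ M then 1 else 0) := by
  by_cases h : t + 1 ∈ M
  · have he : M ∩ Finset.Icc 1 (t + 1) = insert (t + 1) (M ∩ Finset.Icc 1 t) := by
      ext x
      simp only [Finset.mem_inter, Finset.mem_Icc, Finset.mem_insert]
      constructor
      · rintro ⟨hx, h1, h2⟩
        rcases Nat.lt_or_ge x (t + 1) with hlt | hge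
        · exact Or.inr ⟨hx, h1, by omega⟩
        · exact Or.inl (by omega)
      · rintro (rfl | ⟨hx, h1, h2⟩)
        · exact ⟨h, by omega, le_refl _⟩
        · exact ⟨hx, h1, by omega⟩
    rw [he, Finset.card_insert_of_notMem (fun hc =>
      absurd (Finset.mem_Icc.1 (Finset.mem_inter.1 hc).2).2 (by omega)), if_pos h]
  · have he : M ∩ Finset.Icc 1 (t + 1) = M ∩ Finset.Icc 1 t := by
      ext x
      simp only [Finset.mem_inter, Finset.mem_Icc]
      constructor
      · rintro ⟨hx, h1, h2⟩
        refine ⟨hx, h1, ?_⟩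
        have hne : x ≠ t + 1 := fun hxe => h (hxe ▸ hx)
        omega
      · rintro ⟨hx, h1, h2⟩; exact ⟨hx, h1, by omega⟩
    rw [he, if_neg h, Nat.add_zero]

lemma mem_image_sub_one {M : Finset ℕ} (hM : M ⊆ Finset.Icc 1 n) {t : ℕ} (ht : t < n) :
    ((t : ZMod n) ∈ M.image (fun x => ((x - 1 : ℕ) : ZMod n))) ↔ t + 1 ∈ M := by
  simp only [Finset.mem_image]
  constructor
  · rintro ⟨x, hx, hcast⟩
    obtain ⟨hx1, hx2⟩ := Finset.mem_Icc.1 (hM hx)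
    have hlt : x - 1 < n := by omega
    have := congrArg ZMod.val hcast
    rw [ZMod.val_cast_of_lt hlt, ZMod.val_cast_of_lt ht] at this
    have : x = t + 1 := by omega
    rwa [← this]
  · intro h
    exact ⟨t + 1, h, by norm_num⟩

lemma card_image_sub_one {M : Finset ℕ} (hM : M ⊆ Finset.Icc 1 n) :
    (M.image (fun x => ((x - 1 : ℕ) : ZMod n))).card = M.card := by
  apply Finset.card_image_of_injOn
  intro x hx y hy hxy
  obtain ⟨hx1, hx2⟩ := Finset.mem_Icc.1 (hM hx)
  obtain ⟨hy1, hy2⟩ := Finset.mem_Icc.1 (hM hy)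
  have := congrArg ZMod.val hxy
  rw [ZMod.val_cast_of_lt (by omega : x - 1 < n), ZMod.val_cast_of_lt (by omega : y - 1 < n)] at this
  omega

lemma psum_image_sub_one {M : Finset ℕ} (hM : M ⊆ Finset.Icc 1 n) {t : ℕ} (ht : t ≤ n) :
    psum n (M.image (fun x => ((x - 1 : ℕ) : ZMod n))) t
      = 2 * t - 3 * ((M ∩ Finset.Icc 1 t).card : ℤ) := by
  induction t with
  | zero => simp [psum_zero]
  | succ t ih =>
      have ht' : t < n := by omega
      rw [psum_succ, ih (by omega), card_inter_succ]
      have : stepf n (M.image (fun x => ((x - 1 : ℕ) : ZMod n))) t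
          = if t + 1 ∈ M then (-1 : ℤ) else 2 := by
        unfold stepf
        rw [if_congr (mem_image_sub_one hM ht') rfl rfl]
      rw [this]
      by_cases h : t + 1 ∈ M <;> simp [h] <;> push_cast <;> ring

lemma cond_all_iff {M : Finset ℕ} (hM : M ⊆ Finset.Icc 1 n) :
    (∀ x ∈ M, 3 * (M ∩ Finset.Icc 1 x).card ≤ 2 * x - 1)
      ↔ (∀ t ∈ Finset.Icc 1 n, 3 * (M ∩ Finset.Icc 1 t).card ≤ 2 * t - 1) := by
  constructor
  · intro hcond
    have aux : ∀ t, t ≤ n → t = 0 ∨ 3 * (M ∩ Finset.Icc 1 t).card ≤ 2 * t - 1 := by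
      intro t
      induction t with
      | zero => intro _; exact Or.inl rfl
      | succ t ih =>
          intro ht
          right
          by_cases h : t + 1 ∈ M
          · exact hcond _ h
          · have hc := card_inter_succ M t
            rw [if_neg h] at hc
            rcases ih (by omega) with h0 | hle
            · subst h0
              have hz : (M ∩ Finset.Icc 1 0).card = 0 := by
                rw [Finset.Icc_eq_empty (by omega), Finset.inter_empty, Finset.card_empty]
              omega
            · omega
    intro t ht
    obtain ⟨ht1, ht2⟩ := Finset.mem_Icc.1 ht
    rcases aux t ht2 with h0 | hle
    · omega
    · exact hle
  · intro hcond x hx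
    exact hcond x (hM hx)

lemma good_iff_cond {M : Finset ℕ} (hM : M ⊆ Finset.Icc 1 n) :
    GoodR n (M.image (fun x => ((x - 1 : ℕ) : ZMod n))) 0
      ↔ (∀ x ∈ M, 3 * (M ∩ Finset.Icc 1 x).card ≤ 2 * x - 1) := by
  rw [cond_all_iff hM]
  constructor
  · intro hg t ht
    obtain ⟨ht1, ht2⟩ := Finset.mem_Icc.1 ht
    have := hg t ht
    rw [Nat.zero_add, psum_zero, psum_image_sub_one hM ht2] at this
    omega
  · intro hc t ht
    obtain ⟨ht1, ht2⟩ := Finset.mem_Icc.1 ht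
    have := hc t ht
    rw [Nat.zero_add, psum_zero, psum_image_sub_one hM ht2]
    omega

end Transl

lemma roundtrip {n : ℕ} [NeZero n] (S : Finset (ZMod n)) :
    (S.image (fun z : ZMod n => z.val + 1)).image (fun x => ((x - 1 : ℕ) : ZMod n)) = S := by
  rw [Finset.image_image]
  have h : ∀ z ∈ S, ((fun x => ((x - 1 : ℕ) : ZMod n)) ∘ (fun z : ZMod n => z.val + 1)) z
      = id z := by
    intro z _
    simp only [Function.comp_apply, Nat.add_sub_cancel, id_eq]
    exact ZMod.natCast_rightInverse z
  rw [Finset.image_congr h, Finset.image_id]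

theorem count_maximal_sets_combinatorial (k : ℕ) (hk : 1 ≤ k) :
    ((Finset.Icc 1 (3*k-1)).powerset.filter
        (fun M => M.card = 2*k - 1 ∧
          ∀ x ∈ M, 3 * (M ∩ Finset.Icc 1 x).card ≤ 2*x - 1)).card =
      (3*k - 2).choose (2*k - 1) / k := by
  set n := 3*k-1 with hn
  set c := 2*k-1 with hc
  haveI : NeZero n := ⟨by omega⟩
  have hnc : 2*n = 3*c + 1 := by omega
  set G0 := (Finset.powersetCard c (Finset.univ : Finset (ZMod n))).filter
      (fun S => GoodR n S 0) with hG0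
  have hbij : ((Finset.Icc 1 n).powerset.filter
      (fun M => M.card = c ∧
        ∀ x ∈ M, 3 * (M ∩ Finset.Icc 1 x).card ≤ 2*x - 1)).card = G0.card := by
    refine Finset.card_bij' (fun M _ => M.image (fun x => ((x - 1 : ℕ) : ZMod n)))
      (fun S _ => S.image (fun z : ZMod n => z.val + 1)) ?_ ?_ ?_ ?_
    · intro M hM
      have h' := Finset.mem_filter.1 hM
      have hMs := Finset.mem_powerset.1 h'.1
      have hMc := h'.2.1
      have hMcond := h'.2.2
      refine Finset.mem_filter.2 ⟨?_, ?_⟩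
      · exact Finset.mem_powersetCard_univ.2 (by rw [card_image_sub_one hMs, hMc])
      · exact (good_iff_cond hMs).2 hMcond
    · intro S hS
      obtain ⟨hS1, hS2⟩ := Finset.mem_filter.1 hS
      have hScard : S.card = c := Finset.mem_powersetCard_univ.1 hS1
      set M := S.image (fun z : ZMod n => z.val + 1) with hM
      have hMs : M ⊆ Finset.Icc 1 n := by
        intro x hx
        obtain ⟨z, _, rfl⟩ := Finset.mem_image.1 hx
        have := ZMod.val_lt z
        simp only [Finset.mem_Icc]
        omega
      have hMc : M.card = c := by
        rw [hM, Finset.card_image_of_injective _        (fun a b hab => ZMod.val_injective n (by omega)), hScard]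
      refine Finset.mem_filter.2 ⟨Finset.mem_powerset.2 hMs, hMc, ?_⟩
      refine (good_iff_cond hMs).1 ?_
      rw [hM, roundtrip]
      exact hS2
    · intro M hM
      have hMs : M ⊆ Finset.Icc 1 n := Finset.mem_powerset.1 (Finset.mem_filter.1 hM).1
      show Finset.image (fun z : ZMod n => z.val + 1)
        (Finset.image (fun x => ((x - 1 : ℕ) : ZMod n)) M) = M
      rw [Finset.image_image]
      have h : ∀ x ∈ M, ((fun z : ZMod n => z.val + 1) ∘ (fun x => ((x - 1 : ℕ) : ZMod n))) x
          = id x := by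
        intro x hx
        obtain ⟨hx1, hx2⟩ := Finset.mem_Icc.1 (hMs hx)
        simp only [Function.comp_apply, id_eq]
        rw [ZMod.val_cast_of_lt (by omega : x - 1 < n)]
        omega
      rw [Finset.image_congr h, Finset.image_id]
    · intro S _
      exact roundtrip S
  rw [hbij]
  have hmaster : n * G0.card = n.choose c := count_master hnc
  have hid : n * (3*k-2).choose (k-1) = n.choose k * k := by
    have := Nat.add_one_mul_choose_eq (3*k-2) (k-1)
    rw [show 3*k-2+1 = n by omega, show k-1+1 = k by omega] at this
    exact this
  have hsymm1 : n.choose k = n.choose c := by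
    have : n - c = k := by omega
    rw [← this]
    exact Nat.choose_symm (by omega)
  have hsymm2 : (3*k-2).choose (k-1) = (3*k-2).choose c := by
    have : (3*k-2) - (k-1) = c := by omega
    rw [← this]
    exact (Nat.choose_symm (by omega)).symm
  have hkey : k * G0.card = (3*k-2).choose c := by
    have h1 : n * (k * G0.card) = n * ((3*k-2).choose c) := by
      calc n * (k * G0.card) = k * (n * G0.card) := by ring
        _ = k * n.choose c := by rw [hmaster]
        _ = k * n.choose k := by rw [hsymm1]
        _ = n.choose k * k := by ring
        _ = n * (3*k-2).choose (k-1) := hid.symm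
        _ = n * ((3*k-2).choose c) := by rw [hsymm2]
    exact Nat.eq_of_mul_eq_mul_left (by omega) h1
  exact (Nat.div_eq_of_eq_mul_left (by omega) (by rw [← hkey]; ring)).symm
end
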